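/- arXiv:1602.03226 — 4 statements merged into one kernel-verified Lean document; each statement's English description precedes it below -/
import Mathlib

section
/- Let R be a commutative noetherian local ring with maximal ideal m and let L be a free R-module. Then the m-adic completion L̂ is a flat R-module. -/
open TensorProduct

namespace AdicFlatAux

variable {R : Type*} [CommRing R]

theorem flat_of_forall_trivial {R : Type*} [CommRing R] {M : Type*}
    [AddCommGroup M] [Module R M]
    (H : ∀ (n : ℕ) (f : Fin n → R) (x : Fin n → M), (∑ i, f i • x i) = 0 →
      ∃ (s : ℕ) (a : Fin n → Fin s → R) (y : Fin s → M),
        (∀ i, x i = ∑ j, a i j • y j) ∧ (∀ j, (∑ i, f i * a i j) = 0)) :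
    Module.Flat R M := by
  rw [Module.Flat.iff_rTensor_injective']
  intro J
  rw [← LinearMap.ker_eq_bot, LinearMap.ker_eq_bot']
  intro t ht
  obtain ⟨S, rfl⟩ := TensorProduct.exists_finset t
  set n := S.card with hn
  set e : Fin n ≃ S := S.equivFin.symm with he
  set f : Fin n → R := fun i => ((e i).1.1 : R) with hf
  set x : Fin n → M := fun i => (e i).1.2 with hxdef
  have hrw : ∑ p ∈ S, p.1 ⊗ₜ[R] p.2 = ∑ i : Fin n, ((e i).1 : J × M).1 ⊗ₜ[R] ((e i).1 : J × M).2 := by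
    rw [← Finset.sum_attach S (fun p => p.1 ⊗ₜ[R] p.2)]
    exact (Equiv.sum_comp e (fun p : S => (p.1).1 ⊗ₜ[R] (p.1).2)).symm
  rw [hrw] at ht ⊢
  have hsum : ∑ i, f i • x i = 0 := by
    have := congrArg (TensorProduct.lid R M) ht
    simpa [map_sum, hf, hxdef] using this
  obtain ⟨s, a, y, hy, ha⟩ := H n f x hsum
  have hzero : ∀ j, (∑ i, a i j • (e i).1.1 : J) = 0 := by
    intro j
    have : ((∑ i, a i j • (e i).1.1 : J) : R) = 0 := by
      push_cast
      rw [← ha j]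
      exact Finset.sum_congr rfl fun i _ => by rw [smul_eq_mul, mul_comm]
    exact Subtype.ext this
  calc ∑ i : Fin n, ((e i).1 : J × M).1 ⊗ₜ[R] ((e i).1 : J × M).2
      = ∑ i, (e i).1.1 ⊗ₜ[R] (∑ j, a i j • y j) := by
        exact Finset.sum_congr rfl fun i _ => by rw [← hy i]
    _ = ∑ i, ∑ j, (a i j • (e i).1.1) ⊗ₜ[R] y j := by
        refine Finset.sum_congr rfl fun i _ => ?_
        rw [tmul_sum]
        exact Finset.sum_congr rfl fun j _ => (smul_tmul _ _ _).symm
    _ = ∑ j, (∑ i, a i j • (e i).1.1) ⊗ₜ[R] y j := by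
        rw [Finset.sum_comm]
        exact Finset.sum_congr rfl fun j _ => by rw [sum_tmul]
    _ = 0 := by
        refine Finset.sum_eq_zero fun j _ => ?_
        rw [hzero j, zero_tmul]

lemma coord_mem_of_mem_smul_top_finsupp {ι : Type*} {J : Ideal R} {z : ι →₀ R}
    (hz : z ∈ J • (⊤ : Submodule R (ι →₀ R))) (α : ι) : z α ∈ J := by
  refine Submodule.smul_induction_on hz (fun r hr m _ => ?_) (fun u v hu hv => ?_)
  · simpa using Ideal.mul_mem_right (m α) J hr
  · simpa using add_mem hu hv

lemma mem_smul_top_finsupp {ι : Type*} {J : Ideal R} {z : ι →₀ R}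
    (hz : ∀ α, z α ∈ J) : z ∈ J • (⊤ : Submodule R (ι →₀ R)) := by
  rw [← Finsupp.sum_single z]
  refine Submodule.sum_mem _ fun α _ => ?_
  have h : Finsupp.single α (z α) = z α • Finsupp.single α (1 : R) := by
    rw [Finsupp.smul_single' (z α) α 1, mul_one]
  rw [h]
  exact Submodule.smul_mem_smul (hz α) trivial

lemma coord_mem_of_mem_smul_top_pi {m : ℕ} {J : Ideal R} {v : Fin m → R}
    (hv : v ∈ J • (⊤ : Submodule R (Fin m → R))) (i : Fin m) : v i ∈ J := by
  refine Submodule.smul_induction_on hv (fun r hr w _ => ?_) (fun u w hu hw => ?_)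
  · simpa using Ideal.mul_mem_right (w i) J hr
  · simpa using add_mem hu hw

lemma mem_smul_top_pi {m : ℕ} {J : Ideal R} {v : Fin m → R}
    (hv : ∀ i, v i ∈ J) : v ∈ J • (⊤ : Submodule R (Fin m → R)) := by
  rw [← Finset.univ_sum_single v]
  refine Submodule.sum_mem _ fun i _ => ?_
  have h : Pi.single i (v i) = v i • (Pi.single i (1 : R) : Fin m → R) := by
    rw [← Pi.single_smul, smul_eq_mul, mul_one]
  rw [h]
  exact Submodule.smul_mem_smul (hv i) trivial

lemma ideal_smul_top_R (J : Ideal R) : J • (⊤ : Submodule R R) = J := by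
  rw [Ideal.smul_eq_mul, Ideal.mul_top]

variable (I : Ideal R) {ι : Type*}

/-- Lemma C: decompose a tuple whose coordinate vectors lie in `span k + Iⁿ`. -/
lemma exists_decomp {r s : ℕ} (k : Fin s → (Fin r → R)) (n : ℕ)
    (ξ : Fin r → (ι →₀ R))
    (hξ : ∀ α, (fun i => ξ i α) ∈
      Submodule.span R (Set.range k) ⊔ (I ^ n • ⊤ : Submodule R (Fin r → R))) :
    ∃ (u : Fin s → (ι →₀ R)) (z : Fin r → (ι →₀ R)),
      (∀ i, ξ i = (∑ j, k j i • u j) + z i) ∧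
      ∀ i, z i ∈ (I ^ n • ⊤ : Submodule R (ι →₀ R)) := by
  classical
  set T : Finset ι := Finset.univ.biUnion (fun i : Fin r => (ξ i).support) with hT
  have hTs : ∀ α, α ∉ T → ∀ i, ξ i α = 0 := by
    intro α hα i
    by_contra h
    exact hα (Finset.mem_biUnion.mpr ⟨i, Finset.mem_univ i, Finsupp.mem_support_iff.mpr h⟩)
  have hch : ∀ α, ∃ (c : Fin s → R) (w : Fin r → R),
      (∀ i, ξ i α = (∑ j, c j * k j i) + w i) ∧ (∀ i, w i ∈ I ^ n) ∧
      ((∀ i, ξ i α = 0) → c = 0 ∧ w = 0) := by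
    intro α
    by_cases h0 : ∀ i, ξ i α = 0
    · exact ⟨0, 0, fun i => by simp [h0 i], fun i => by simp, fun _ => ⟨rfl, rfl⟩⟩
    · obtain ⟨κ, hκ, w, hw, hkw⟩ := Submodule.mem_sup.mp (hξ α)
      obtain ⟨c, hc⟩ := (Submodule.mem_span_range_iff_exists_fun R).mp hκ
      refine ⟨c, w, fun i => ?_, fun i => coord_mem_of_mem_smul_top_pi hw i,
        fun h => absurd h h0⟩
      have h2 := congrFun hkw i
      rw [← h2, ← hc]
      simp [Finset.sum_apply, smul_eq_mul]
  choose c w h1 h2 h3 using hch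
  refine ⟨fun j => Finsupp.onFinset T (fun α => c α j) (fun α h => ?_),
    fun i => Finsupp.onFinset T (fun α => w α i) (fun α h => ?_), fun i => ?_, fun i => ?_⟩
  · by_contra hα
    exact h (congrFun (h3 α (hTs α hα)).1 j)
  · by_contra hα
    exact h (congrFun (h3 α (hTs α hα)).2 i)
  · ext α
    rw [h1 α i]
    simp only [Finsupp.add_apply, Finsupp.onFinset_apply]
    congr 1
    rw [Finsupp.finset_sum_apply]
    exact Finset.sum_congr rfl fun j _ => by
      rw [Finsupp.smul_apply, Finsupp.onFinset_apply, smul_eq_mul, mul_comm]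
  · exact mem_smul_top_finsupp (fun α => by
      simpa using h2 α i)

/-- Lemma D: correction with small coefficients. -/
lemma exists_correction {r s : ℕ} (k : Fin s → (Fin r → R)) {n m : ℕ}
    (hle : (I ^ n • ⊤ : Submodule R (Fin r → R)) ⊓ Submodule.span R (Set.range k) ≤
      I ^ m • Submodule.span R (Set.range k))
    (δ : Fin s → (ι →₀ R))
    (hδ : ∀ i, (∑ j, k j i • δ j) ∈ (I ^ n • ⊤ : Submodule R (ι →₀ R))) :
    ∃ τ : Fin s → (ι →₀ R),
      (∀ j, τ j ∈ (I ^ m • ⊤ : Submodule R (ι →₀ R))) ∧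
      (∀ i, (∑ j, k j i • τ j) = ∑ j, k j i • δ j) := by
  classical
  set g : (Fin s → R) →ₗ[R] (Fin r → R) := Fintype.linearCombination R k with hg
  have hgapp : ∀ (t : Fin s → R) (i : Fin r), g t i = ∑ j, t j * k j i := by
    intro t i
    rw [hg, Fintype.linearCombination_apply]
    simp [Finset.sum_apply]
  set T : Finset ι := Finset.univ.biUnion (fun j : Fin s => (δ j).support) with hT
  have hTs : ∀ α, α ∉ T → ∀ j, δ j α = 0 := by
    intro α hα j
    by_contra h
    exact hα (Finset.mem_biUnion.mpr ⟨j, Finset.mem_univ j, Finsupp.mem_support_iff.mpr h⟩)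
  have hch : ∀ α, ∃ t' : Fin s → R, (∀ j, t' j ∈ I ^ m) ∧
      g t' = g (fun j => δ j α) ∧ ((∀ j, δ j α = 0) → t' = 0) := by
    intro α
    by_cases h0 : ∀ j, δ j α = 0
    · refine ⟨0, fun j => by simp, ?_, fun _ => rfl⟩
      have : (fun j => δ j α) = (0 : Fin s → R) := funext h0
      rw [this]
    · have hmem : g (fun j => δ j α) ∈
          (I ^ n • ⊤ : Submodule R (Fin r → R)) ⊓ Submodule.span R (Set.range k) := by
        constructor
        · refine mem_smul_top_pi (fun i => ?_)
          have h := coord_mem_of_mem_smul_top_finsupp (hδ i) α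
          have hval : (∑ j, k j i • δ j) α = ∑ j, δ j α * k j i := by
            rw [Finsupp.finset_sum_apply]
            exact Finset.sum_congr rfl fun j _ => by
              rw [Finsupp.smul_apply, smul_eq_mul, mul_comm]
          rw [hval] at h
          rw [hgapp]
          exact h
        · rw [← Fintype.range_linearCombination R k, ← hg]
          exact ⟨_, rfl⟩
      have hmem2 := hle hmem
      have heq : I ^ m • Submodule.span R (Set.range k) =
          Submodule.map g (I ^ m • ⊤ : Submodule R (Fin s → R)) := by
        rw [Submodule.map_smul'', Submodule.map_top, hg, Fintype.range_linearCombination R k]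
      rw [heq] at hmem2
      obtain ⟨t', ht', hgt⟩ := hmem2
      exact ⟨t', fun j => coord_mem_of_mem_smul_top_pi ht' j, hgt, fun h => absurd h h0⟩
  choose t' h1 h2 h3 using hch
  have hsupp : ∀ (j : Fin s) (α : ι), (fun α => t' α j) α ≠ 0 → α ∈ T := by
    intro j α h
    by_contra hα
    exact h (congrFun (h3 α (hTs α hα)) j)
  refine ⟨fun j => Finsupp.onFinset T (fun α => t' α j) (hsupp j),
    fun j => mem_smul_top_finsupp (fun α => by simpa using h1 α j), fun i => ?_⟩
  ext α
  rw [Finsupp.finset_sum_apply, Finsupp.finset_sum_apply]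
  have hL : ∑ j, (k j i • Finsupp.onFinset T (fun α => t' α j) (hsupp j)) α = g (t' α) i := by
    rw [hgapp]
    exact Finset.sum_congr rfl fun j _ => by
      rw [Finsupp.smul_apply, Finsupp.onFinset_apply, smul_eq_mul, mul_comm]
  have hR : ∑ j, (k j i • δ j) α = g (fun j => δ j α) i := by
    rw [hgapp]
    exact Finset.sum_congr rfl fun j _ => by
      rw [Finsupp.smul_apply, smul_eq_mul, mul_comm]
  rw [hL, hR, h2 α]

theorem flat_adicCompletion_finsupp {R : Type*} [CommRing R] [IsNoetherianRing R]
    (I : Ideal R) (ι : Type*) : Module.Flat R (AdicCompletion I (ι →₀ R)) := by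
  classical
  apply flat_of_forall_trivial
  intro r f x hx
  set π : (Fin r → R) →ₗ[R] R := Fintype.linearCombination R f with hπ
  have hπapp : ∀ v : Fin r → R, π v = ∑ i, v i * f i := by
    intro v
    rw [hπ, Fintype.linearCombination_apply]
    simp [smul_eq_mul]
  obtain ⟨s, k, hk⟩ :=
    Submodule.fg_iff_exists_fin_generating_family.mp (IsNoetherian.noetherian (LinearMap.ker π))
  have hkK : ∀ j, π (k j) = 0 := fun j =>
    LinearMap.mem_ker.mp (hk ▸ Submodule.subset_span (Set.mem_range_self j))
  obtain ⟨c₁, hc₁⟩ := Ideal.exists_pow_inf_eq_pow_smul I (LinearMap.range π)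
  obtain ⟨c₂, hc₂⟩ := Ideal.exists_pow_inf_eq_pow_smul I (LinearMap.ker π)
  -- existence of approximations at every level
  have approx : ∀ n : ℕ, ∃ u : Fin s → (ι →₀ R), ∀ i,
      Submodule.mkQ (I ^ n • ⊤ : Submodule R (ι →₀ R)) (∑ j, k j i • u j) = (x i).val n := by
    intro n
    choose ξ hξ using fun i =>
      Submodule.Quotient.mk_surjective (I ^ (n + c₁) • ⊤ : Submodule R (ι →₀ R))
        ((x i).val (n + c₁))
    have hsum : (∑ i, f i • ξ i) ∈ (I ^ (n + c₁) • ⊤ : Submodule R (ι →₀ R)) := by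
      rw [← Submodule.Quotient.mk_eq_zero]
      have h1 : (Submodule.Quotient.mk (∑ i, f i • ξ i) :
          (ι →₀ R) ⧸ (I ^ (n + c₁) • ⊤ : Submodule R (ι →₀ R))) =
          ∑ i, f i • ((x i).val (n + c₁)) := by
        rw [← Submodule.mkQ_apply, map_sum]
        exact Finset.sum_congr rfl fun i _ => by
          rw [map_smul, Submodule.mkQ_apply, hξ i]
      have h2 : (∑ i, f i • x i).val (n + c₁) = ∑ i, f i • ((x i).val (n + c₁)) := by
        rw [AdicCompletion.val_sum_apply]
        exact Finset.sum_congr rfl fun i _ => AdicCompletion.val_smul_apply _ _ _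
      rw [h1, ← h2, hx, AdicCompletion.val_zero_apply]
    have hcoord : ∀ α, (fun i => ξ i α) ∈
        Submodule.span R (Set.range k) ⊔ (I ^ n • ⊤ : Submodule R (Fin r → R)) := by
      intro α
      have hπv : π (fun i => ξ i α) ∈
          I ^ (n + c₁) • (⊤ : Submodule R R) ⊓ LinearMap.range π := by
        constructor
        · rw [ideal_smul_top_R]
          have hv : π (fun i => ξ i α) = (∑ i, f i • ξ i) α := by
            rw [hπapp, Finsupp.finset_sum_apply]
            exact Finset.sum_congr rfl fun i _ => by
              rw [Finsupp.smul_apply, smul_eq_mul, mul_comm]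
          rw [hv]
          exact coord_mem_of_mem_smul_top_finsupp hsum α
        · exact ⟨_, rfl⟩
      rw [hc₁ (n + c₁) (by omega), Nat.add_sub_cancel] at hπv
      have h2 : π (fun i => ξ i α) ∈
          Submodule.map π (I ^ n • ⊤ : Submodule R (Fin r → R)) := by
        rw [Submodule.map_smul'', Submodule.map_top]
        have h3 : I ^ n • (I ^ c₁ • (⊤ : Submodule R R) ⊓ LinearMap.range π) ≤
            I ^ n • LinearMap.range π := smul_mono_right _ inf_le_right
        exact h3 hπv
      obtain ⟨w, hw, hww⟩ := h2
      refine Submodule.mem_sup.mpr ⟨(fun i => ξ i α) - w, ?_, w, hw, by abel⟩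
      rw [hk]
      exact LinearMap.mem_ker.mpr (by rw [map_sub, hww, sub_self])
    obtain ⟨u, z, hdz, hz⟩ := exists_decomp I k n ξ hcoord
    refine ⟨u, fun i => ?_⟩
    have h5 : Submodule.mkQ (I ^ n • ⊤ : Submodule R (ι →₀ R)) (ξ i) = (x i).val n := by
      have h5a : AdicCompletion.transitionMap I (ι →₀ R) (show n ≤ n + c₁ by omega)
          (Submodule.Quotient.mk (ξ i)) = Submodule.Quotient.mk (ξ i) := rfl
      rw [Submodule.mkQ_apply, ← h5a, hξ i]
      exact (x i).property _
    have h6 : Submodule.mkQ (I ^ n • ⊤ : Submodule R (ι →₀ R)) (∑ j, k j i • u j) =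
        Submodule.mkQ (I ^ n • ⊤ : Submodule R (ι →₀ R)) (ξ i) := by
      rw [eq_comm, Submodule.mkQ_apply, Submodule.mkQ_apply, Submodule.Quotient.eq]
      rw [hdz i]
      simpa using hz i
    rw [h6, h5]
  -- improvement step
  have improve : ∀ (n : ℕ) (u : Fin s → (ι →₀ R)),
      (∀ i, Submodule.mkQ (I ^ n • ⊤ : Submodule R (ι →₀ R)) (∑ j, k j i • u j) = (x i).val n) →
      ∃ w : Fin s → (ι →₀ R),
        (∀ i, Submodule.mkQ (I ^ (n + 1) • ⊤ : Submodule R (ι →₀ R)) (∑ j, k j i • w j) =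
          (x i).val (n + 1)) ∧
        ∀ j, w j - u j ∈ (I ^ (n - c₂) • ⊤ : Submodule R (ι →₀ R)) := by
    intro n u hu
    obtain ⟨u', hu'⟩ := approx (n + 1)
    have hδ : ∀ i, (∑ j, k j i • (u' j - u j)) ∈ (I ^ n • ⊤ : Submodule R (ι →₀ R)) := by
      intro i
      have hsum : ∑ j, k j i • (u' j - u j) =
          (∑ j, k j i • u' j) - (∑ j, k j i • u j) := by
        rw [← Finset.sum_sub_distrib]
        exact Finset.sum_congr rfl fun j _ => smul_sub _ _ _
      have h1 : Submodule.mkQ (I ^ n • ⊤ : Submodule R (ι →₀ R)) (∑ j, k j i • u' j) =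
          (x i).val n := by
        have h1a : AdicCompletion.transitionMap I (ι →₀ R)
          (show n ≤ n + 1 by omega) (Submodule.Quotient.mk (∑ j, k j i • u' j)) =
            Submodule.Quotient.mk (∑ j, k j i • u' j) := rfl
        have hu'' := hu' i
        rw [Submodule.mkQ_apply] at hu''
        rw [Submodule.mkQ_apply, ← h1a, hu'']
        exact (x i).property _
      have h3 : Submodule.mkQ (I ^ n • ⊤ : Submodule R (ι →₀ R))
          ((∑ j, k j i • u' j) - (∑ j, k j i • u j)) = 0 := by
        rw [map_sub, h1, hu i, sub_self]
      rw [hsum, ← Submodule.Quotient.mk_eq_zero, ← Submodule.mkQ_apply]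
      exact h3
    have hle : (I ^ n • ⊤ : Submodule R (Fin r → R)) ⊓ Submodule.span R (Set.range k) ≤
        I ^ (n - c₂) • Submodule.span R (Set.range k) := by
      rw [hk]
      by_cases hn : c₂ ≤ n
      · rw [hc₂ n hn]
        exact smul_mono_right _ inf_le_right
      · have h0 : n - c₂ = 0 := by omega
        rw [h0, pow_zero, Ideal.one_eq_top, Submodule.top_smul]
        exact inf_le_right
    obtain ⟨τ, hτ1, hτ2⟩ := exists_correction I k hle (fun j => u' j - u j) hδ
    refine ⟨fun j => u j + τ j, fun i => ?_, fun j => by simpa using hτ1 j⟩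
    have heq : ∑ j, k j i • (u j + τ j) = ∑ j, k j i • u' j := by
      calc ∑ j, k j i • (u j + τ j)
          = (∑ j, k j i • u j) + ∑ j, k j i • τ j := by
            rw [← Finset.sum_add_distrib]
            exact Finset.sum_congr rfl fun j _ => smul_add _ _ _
        _ = (∑ j, k j i • u j) + ∑ j, k j i • (u' j - u j) := by rw [hτ2 i]
        _ = (∑ j, k j i • u j) + ((∑ j, k j i • u' j) - (∑ j, k j i • u j)) := by
            congr 1
            rw [← Finset.sum_sub_distrib]
            exact Finset.sum_congr rfl fun j _ => smul_sub _ _ _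
        _ = ∑ j, k j i • u' j := by abel
    rw [heq]
    exact hu' i
  -- build the Cauchy sequence of approximations
  choose F hF1 hF2 using improve
  obtain ⟨u0, hu0⟩ := approx 0
  let v : ∀ n : ℕ, {u : Fin s → (ι →₀ R) // ∀ i,
      Submodule.mkQ (I ^ n • ⊤ : Submodule R (ι →₀ R)) (∑ j, k j i • u j) = (x i).val n} :=
    fun n => Nat.rec ⟨u0, hu0⟩ (fun n p => ⟨F n p.1 p.2, hF1 n p.1 p.2⟩) n
  have hvd : ∀ n j, (v (n + 1)).1 j - (v n).1 j ∈ (I ^ (n - c₂) • ⊤ : Submodule R (ι →₀ R)) :=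
    fun n j => hF2 n (v n).1 (v n).2 j
  have hcau : ∀ j (n : ℕ), (v (n + c₂)).1 j ≡ (v (n + 1 + c₂)).1 j
      [SMOD (I ^ n • ⊤ : Submodule R (ι →₀ R))] := by
    intro j n
    rw [SModEq.sub_mem]
    have h1 := hvd (n + c₂) j
    rw [Nat.add_sub_cancel] at h1
    have h2 := Submodule.neg_mem _ h1
    rw [neg_sub] at h2
    have h3 : n + 1 + c₂ = n + c₂ + 1 := by omega
    rw [h3]
    exact h2
  set y : Fin s → AdicCompletion I (ι →₀ R) := fun j =>
    AdicCompletion.mk I (ι →₀ R)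
      (AdicCompletion.AdicCauchySequence.mk I (ι →₀ R) (fun n => (v (n + c₂)).1 j) (hcau j))
    with hy
  refine ⟨s, fun i j => k j i, y, fun i => ?_, fun j => ?_⟩
  · refine AdicCompletion.ext (fun n => ?_)
    have hyval : ∀ j, (y j).val n =
        Submodule.mkQ (I ^ n • ⊤ : Submodule R (ι →₀ R)) ((v (n + c₂)).1 j) := by
      intro j
      rw [hy]
      rfl
    have hstep : Submodule.mkQ (I ^ n • ⊤ : Submodule R (ι →₀ R))
        (∑ j, k j i • (v (n + c₂)).1 j) = (x i).val n := by
      have h1 : AdicCompletion.transitionMap I (ι →₀ R) (show n ≤ n + c₂ by omega)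
        (Submodule.Quotient.mk (∑ j, k j i • (v (n + c₂)).1 j)) =
          Submodule.Quotient.mk (∑ j, k j i • (v (n + c₂)).1 j) := rfl
      have h2 := (v (n + c₂)).2 i
      rw [Submodule.mkQ_apply] at h2
      rw [Submodule.mkQ_apply, ← h1, h2]
      exact (x i).property _
    have hval : (∑ j, k j i • y j).val n =
        ∑ j, k j i • (y j).val n := by
      rw [AdicCompletion.val_sum_apply]
      exact Finset.sum_congr rfl fun j _ => AdicCompletion.val_smul_apply _ _ _
    rw [hval, ← hstep, map_sum]
    exact Finset.sum_congr rfl fun j _ => by rw [hyval j, map_smul]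
  · have h1 := hkK j
    rw [hπapp] at h1
    calc ∑ i, f i * k j i = ∑ i, k j i * f i :=
          Finset.sum_congr rfl fun i _ => mul_comm _ _
      _ = 0 := h1

end AdicFlatAux

/-- Over a commutative noetherian local ring `(R, 𝔪)`, the `𝔪`-adic
completion `L̂` of a free `R`-module `L` is flat over `R`. -/
theorem adicCompletion_of_free_flat
    {R : Type*} [CommRing R] [IsNoetherianRing R] [IsLocalRing R]
    (L : Type*) [AddCommGroup L] [Module R L] [Module.Free R L] :
    Module.Flat R (AdicCompletion (IsLocalRing.maximalIdeal R) L) := by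
  set I := IsLocalRing.maximalIdeal R
  let e : L ≃ₗ[R] (Module.Free.ChooseBasisIndex R L →₀ R) := (Module.Free.chooseBasis R L).repr
  haveI := AdicFlatAux.flat_adicCompletion_finsupp I (Module.Free.ChooseBasisIndex R L)
  exact Module.Flat.of_linearEquiv ((AdicCompletion.congr I e).restrictScalars R)
end

section
/- Let R be a commutative noetherian local ring with maximal ideal m, let L be a free R-module, and set L' = L̂/L where L̂ is the m-adic completion. Then the natural map L/mL → L̂/mL̂ is an isomorphism; consequently L' ⊗_R (R/m) = 0. -/
open Submodule

section Aux

variable {R : Type u} [CommRing R] {M : Type u} [AddCommGroup M] [Module R M]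

/-- Decompose an element of `I • N` along a finite generating set of `I`. -/
lemma aux_mem_smul_decompose {I : Ideal R} (s : Finset R)
    (hs : Ideal.span (s : Set R) = I) (N : Submodule R M) {x : M} (hx : x ∈ I • N) :
    ∃ c : R → M, (∀ t ∈ s, c t ∈ N) ∧ x = ∑ t ∈ s, t • c t := by
  refine Submodule.smul_induction_on hx ?_ ?_
  · intro a ha n hn
    rw [← hs] at ha
    obtain ⟨f, -, hf⟩ := mem_span_finset.mp ha
    refine ⟨fun t => f t • n, fun t _ => N.smul_mem _ hn, ?_⟩
    rw [← hf, Finset.sum_smul]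
    exact Finset.sum_congr rfl fun t _ => by rw [smul_eq_mul, smul_smul, mul_comm]
  · rintro x y ⟨cx, hcx, rfl⟩ ⟨cy, hcy, rfl⟩
    exact ⟨fun t => cx t + cy t, fun t ht => N.add_mem (hcx t ht) (hcy t ht),
      by simp [smul_add, Finset.sum_add_distrib]⟩

variable (I : Ideal R)

/-- Key approximation: every element of the adic completion is, modulo `I • ⊤`,
in the image of `M`. -/
lemma aux_exists_sub_mem (hfg : I.FG) (x : AdicCompletion I M) :
    ∃ y : M, x - AdicCompletion.of I M y ∈
      (I • ⊤ : Submodule R (AdicCompletion I M)) := by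
  obtain ⟨s, hs⟩ := hfg
  obtain ⟨f, rfl⟩ := AdicCompletion.mk_surjective I M x
  refine ⟨f 1, ?_⟩
  -- the shifted, recentered sequence
  set g : ℕ → M := fun n => f (n + 1) - f 1 with hg
  have hgmem : ∀ n : ℕ, g (n + 1) - g n ∈ (I ^ (n + 1) • ⊤ : Submodule R M) := by
    intro n
    have := (f.property (show n + 1 ≤ n + 2 by omega))
    have h1 : f (n + 1) - f (n + 2) ∈ (I ^ (n + 1) • ⊤ : Submodule R M) :=
      SModEq.sub_mem.mp this
    have : g (n + 1) - g n = -(f (n + 1) - f (n + 2)) := by simp only [hg]; abel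
    rw [this]
    exact neg_mem h1
  have hsmul : ∀ n : ℕ, (I ^ (n + 1) • ⊤ : Submodule R M) =
      I • (I ^ n • ⊤ : Submodule R M) := by
    intro n
    rw [pow_succ', ← Ideal.smul_eq_mul, Submodule.smul_assoc]
  -- choose increments
  have hchoice : ∀ n : ℕ, ∃ d : R → M, (∀ t ∈ s, d t ∈ (I ^ n • ⊤ : Submodule R M)) ∧
      g (n + 1) - g n = ∑ t ∈ s, t • d t := by
    intro n
    exact aux_mem_smul_decompose s hs _ ((hsmul n) ▸ hgmem n)
  choose d hd1 hd2 using hchoice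
  -- partial sums
  set G : R → ℕ → M := fun t n => ∑ k ∈ Finset.range n, d k t with hG
  have hGsum : ∀ n : ℕ, ∑ t ∈ s, t • G t n = g n := by
    intro n
    induction n with
    | zero => simp [hG, hg]
    | succ n ih =>
      have : ∀ t, G t (n + 1) = G t n + d n t := by
        intro t; simp [hG, Finset.sum_range_succ]
      calc ∑ t ∈ s, t • G t (n + 1) = ∑ t ∈ s, (t • G t n + t • d n t) := by
            simp [this, smul_add]
        _ = (∑ t ∈ s, t • G t n) + ∑ t ∈ s, t • d n t := Finset.sum_add_distrib
        _ = g n + (g (n + 1) - g n) := by rw [ih, ← hd2 n]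
        _ = g (n + 1) := by abel
  have hGcauchy : ∀ t : R, t ∈ s → ∀ n : ℕ,
      G t n ≡ G t (n + 1) [SMOD (I ^ n • ⊤ : Submodule R M)] := by
    intro t ht n
    rw [SModEq.sub_mem]
    have : G t n - G t (n + 1) = -(d n t) := by simp [hG, Finset.sum_range_succ]
    rw [this]
    exact neg_mem (hd1 n t ht)
  -- the cauchy sequences witnessing membership in I • ⊤
  classical
  set Ghat : R → AdicCompletion I M := fun t =>
    if ht : t ∈ s then
      AdicCompletion.mk I M (AdicCompletion.AdicCauchySequence.mk I M (G t) (hGcauchy t ht))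
    else 0 with hGhat
  have key : AdicCompletion.mk I M f - AdicCompletion.of I M (f 1) =
      ∑ t ∈ s, t • Ghat t := by
    ext n
    rw [AdicCompletion.val_sub_apply, AdicCompletion.val_sum_apply]
    simp only [AdicCompletion.mk_apply_coe, AdicCompletion.of_apply,
      AdicCompletion.val_smul_apply]
    have : ∀ t ∈ s, t • (Ghat t).val n = Submodule.mkQ _ (t • G t n) := by
      intro t ht
      rw [hGhat]
      simp only [dif_pos ht]
      rw [AdicCompletion.mk_apply_coe]
      simp
    rw [Finset.sum_congr rfl this, ← map_sum, hGsum n]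
    have : f n ≡ f (n + 1) [SMOD (I ^ n • ⊤ : Submodule R M)] :=
      f.property (show n ≤ n + 1 by omega)
    rw [← map_sub, Submodule.mkQ_apply, Submodule.mkQ_apply, Submodule.Quotient.eq]
    have h2 : f n - f 1 - g n = f n - f (n + 1) := by simp only [hg]; abel
    rw [h2]
    exact SModEq.sub_mem.mp this
  rw [key]
  refine Submodule.sum_mem _ fun t ht => ?_
  exact Submodule.smul_mem_smul (hs ▸ Submodule.subset_span ht) trivial

/-- If `of x` lies in `I • ⊤` of the completion, then `x ∈ I • ⊤`. -/
lemma aux_of_mem_smul_top {I : Ideal R} {x : M}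
    (hx : AdicCompletion.of I M x ∈ (I • ⊤ : Submodule R (AdicCompletion I M))) :
    x ∈ (I • ⊤ : Submodule R M) := by
  have h1 : AdicCompletion.eval I M 1 (AdicCompletion.of I M x) ∈
      Submodule.map (AdicCompletion.eval I M 1) (I • ⊤) := Submodule.mem_map_of_mem hx
  rw [Submodule.map_smul'', Submodule.map_top, AdicCompletion.range_eval] at h1
  have h2 : (I • ⊤ : Submodule R (M ⧸ (I ^ 1 • ⊤ : Submodule R M))) = ⊥ := by
    rw [← Submodule.range_mkQ (I ^ 1 • ⊤ : Submodule R M), ← Submodule.map_top,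
      ← Submodule.map_smul'', pow_one, Submodule.mkQ_map_self]
  rw [h2, Submodule.mem_bot, AdicCompletion.eval_of, Submodule.mkQ_apply,
    Submodule.Quotient.mk_eq_zero, pow_one] at h1
  exact h1

end Aux

/-- Over a commutative noetherian local ring `(R, 𝔪)` with free module `L`,
the natural map `L/𝔪L → L̂/𝔪L̂` is an isomorphism; consequently, with `L' = L̂/L`, one has
`L' ⊗_R (R/𝔪) = 0`. -/
theorem quotient_map_iso_and_tensor_residue_zero
    {R : Type u} [CommRing R] [IsNoetherianRing R] [IsLocalRing R]
    (L : Type u) [AddCommGroup L] [Module R L] [Module.Free R L] :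
    (∃ e : (L ⧸ (IsLocalRing.maximalIdeal R • ⊤ : Submodule R L)) ≃ₗ[R]
        (AdicCompletion (IsLocalRing.maximalIdeal R) L ⧸
          (IsLocalRing.maximalIdeal R • ⊤ :
            Submodule R (AdicCompletion (IsLocalRing.maximalIdeal R) L))),
      ∀ x : L, e (Submodule.Quotient.mk x) =
        Submodule.Quotient.mk (AdicCompletion.of (IsLocalRing.maximalIdeal R) L x)) ∧
    Subsingleton
      (TensorProduct R
        (AdicCompletion (IsLocalRing.maximalIdeal R) L ⧸
          LinearMap.range (AdicCompletion.of (IsLocalRing.maximalIdeal R) L))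
        (R ⧸ IsLocalRing.maximalIdeal R)) := by
  set I := IsLocalRing.maximalIdeal R with hI
  have hFG : I.FG := IsNoetherian.noetherian I
  set Lhat := AdicCompletion I L with hLhat
  set p : Submodule R L := I • ⊤ with hp
  set q : Submodule R Lhat := I • ⊤ with hq
  have hmap : ∀ x ∈ p, AdicCompletion.of I L x ∈ q := by
    intro x hx
    have := Submodule.mem_map_of_mem (f := AdicCompletion.of I L) hx
    rw [hp, Submodule.map_smul''] at this
    exact Submodule.smul_mono le_rfl le_top this
  set ψ : (L ⧸ p) →ₗ[R] (Lhat ⧸ q) :=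
    Submodule.liftQ p (q.mkQ ∘ₗ AdicCompletion.of I L)
      (fun x hx => by
        simp only [LinearMap.mem_ker, LinearMap.comp_apply, Submodule.mkQ_apply,
          Submodule.Quotient.mk_eq_zero]
        exact hmap x hx) with hψ
  have hψ_apply : ∀ x : L, ψ (Submodule.Quotient.mk x) =
      Submodule.Quotient.mk (AdicCompletion.of I L x) := fun x => rfl
  have hinj : Function.Injective ψ := by
    rw [← LinearMap.ker_eq_bot]
    refine Submodule.ker_liftQ_eq_bot p _ _ ?_
    intro x hx
    simp only [LinearMap.mem_ker, LinearMap.comp_apply, Submodule.mkQ_apply,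
      Submodule.Quotient.mk_eq_zero] at hx
    exact aux_of_mem_smul_top hx
  have hsurj : Function.Surjective ψ := by
    intro y
    obtain ⟨xhat, rfl⟩ := Submodule.Quotient.mk_surjective q y
    obtain ⟨z, hz⟩ := aux_exists_sub_mem I hFG xhat
    refine ⟨Submodule.Quotient.mk z, ?_⟩
    rw [hψ_apply, Submodule.Quotient.eq]
    simpa using Submodule.neg_mem q hz
  constructor
  · exact ⟨LinearEquiv.ofBijective ψ ⟨hinj, hsurj⟩, hψ_apply⟩
  · set L' := Lhat ⧸ LinearMap.range (AdicCompletion.of I L) with hL'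
    have htop : (I • ⊤ : Submodule R L') = ⊤ := by
      refine le_antisymm le_top ?_
      rintro y -
      obtain ⟨xhat, rfl⟩ := Submodule.Quotient.mk_surjective _ y
      obtain ⟨z, hz⟩ := aux_exists_sub_mem I hFG xhat
      have heq : (Submodule.Quotient.mk xhat : L') =
          Submodule.Quotient.mk (xhat - AdicCompletion.of I L z) := by
        rw [Submodule.Quotient.eq]
        simp only [sub_sub_cancel]; exact LinearMap.mem_range_self (AdicCompletion.of I L) z
      rw [heq]
      have := Submodule.mem_map_of_mem
        (f := (LinearMap.range (AdicCompletion.of I L)).mkQ) hz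
      rw [Submodule.map_smul''] at this
      exact Submodule.smul_mono le_rfl le_top this
    have hsub : Subsingleton (L' ⧸ (I • ⊤ : Submodule R L')) :=
      Submodule.Quotient.subsingleton_iff.mpr htop
    exact (TensorProduct.tensorQuotEquivQuotSMul L' I).toEquiv.subsingleton
end

section
/- Let R be a commutative noetherian ring and a an ideal generated by n elements. Then for every R-module M and every i > n, the i-th left derived local homology module H_i(LΛ^a(M)) vanishes. -/
open CategoryTheory

private lemma reduceModIdeal_add {R : Type u} [CommRing R] (J : Ideal R)
    {M N : Type u} [AddCommGroup M] [Module R M] [AddCommGroup N] [Module R N]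
    (f g : M →ₗ[R] N) :
    (f + g).reduceModIdeal J = f.reduceModIdeal J + g.reduceModIdeal J := by
  refine LinearMap.ext fun z => ?_
  obtain ⟨y, rfl⟩ := Submodule.Quotient.mk_surjective _ z
  simp [LinearMap.reduceModIdeal_apply]

/-- The `a`-adic completion functor `Λ^a` on the category of `R`-modules. -/
noncomputable def adicCompletionFunctor (R : Type u) [CommRing R] (I : Ideal R) :
    ModuleCat.{u} R ⥤ ModuleCat.{u} R where
  obj M := ModuleCat.of R (AdicCompletion I M)
  map {M N} f := ModuleCat.ofHom ((AdicCompletion.map I f.hom).restrictScalars R)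
  map_id M := by
    apply ModuleCat.hom_ext
    refine LinearMap.ext fun x => ?_
    show AdicCompletion.map I (LinearMap.id) x = x
    rw [AdicCompletion.map_id]
    rfl
  map_comp {M N P} f g := by
    apply ModuleCat.hom_ext
    refine LinearMap.ext fun x => ?_
    show AdicCompletion.map I (g.hom ∘ₗ f.hom) x = _
    rw [← AdicCompletion.map_comp]
    rfl

instance (R : Type u) [CommRing R] (I : Ideal R) :
    (adicCompletionFunctor R I).Additive where
  map_add := by
    intro M N f g
    apply ModuleCat.hom_ext
    refine LinearMap.ext fun x => AdicCompletion.ext fun n => ?_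
    show (f.hom + g.hom).reduceModIdeal (I ^ n) (x.val n) = _
    rw [reduceModIdeal_add]
    rfl

universe u v w

section RingLemmas

variable {R : Type u} [CommRing R]

/-- Bounded torsion: the annihilators of powers of `x` stabilize. -/
lemma exists_torsion_bound [IsNoetherianRing R] (x : R) :
    ∃ k : ℕ, ∀ m a, k ≤ m → x ^ m * a = 0 → x ^ k * a = 0 := by
  let f : ℕ →o Ideal R :=
    ⟨fun m => LinearMap.ker (LinearMap.lsmul R R (x ^ m)), by
      intro m m' hmm'
      intro a ha
      simp only [LinearMap.mem_ker, LinearMap.lsmul_apply, smul_eq_mul] at ha ⊢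
      obtain ⟨d, rfl⟩ := Nat.exists_eq_add_of_le hmm'
      rw [pow_add, mul_comm (x ^ m), mul_assoc, ha, mul_zero]⟩
  obtain ⟨k, hk⟩ := monotone_stabilizes_iff_noetherian.mpr inferInstance f
  refine ⟨k, fun m a hm ha => ?_⟩
  have : a ∈ f m := by show a ∈ LinearMap.ker (LinearMap.lsmul R R (x ^ m)); simpa [LinearMap.mem_ker] using ha
  rw [← hk m hm] at this
  have h2 : a ∈ LinearMap.ker (LinearMap.lsmul R R (x ^ k)) := this
  simpa [LinearMap.mem_ker] using h2

/-- Artin–Rees colon lemma: `(J ^ (M + c) : x) ⊆ J ^ M + (0 : x)`. -/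
lemma exists_colon_bound [IsNoetherianRing R] (J : Ideal R) (x : R) :
    ∃ c : ℕ, ∀ (M : ℕ) (a : R), x * a ∈ J ^ (M + c) → ∃ g ∈ J ^ M, x * (a - g) = 0 := by
  obtain ⟨c, hc⟩ := Ideal.exists_pow_inf_eq_pow_smul J (Ideal.span {x} : Ideal R)
  refine ⟨c, fun M a ha => ?_⟩
  have hmem : x * a ∈ (J ^ (M + c) • ⊤ ⊓ Ideal.span {x} : Ideal R) := by
    constructor
    · rw [Ideal.smul_eq_mul, Ideal.mul_top]
      exact ha
    · exact Ideal.mem_span_singleton'.mpr ⟨a, mul_comm a x⟩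
  rw [hc (M + c) (by omega)] at hmem
  have hMc : M + c - c = M := by omega
  rw [hMc] at hmem
  have key : (J ^ M • (J ^ c • ⊤ ⊓ Ideal.span {x}) : Ideal R) ≤
      Submodule.map (LinearMap.lsmul R R x) (J ^ M) := by
    refine Submodule.smul_le.mpr fun r hr n hn => ?_
    obtain ⟨b, hb⟩ := Ideal.mem_span_singleton'.mp hn.2
    refine ⟨r * b, Ideal.mul_mem_right _ _ hr, ?_⟩
    simp only [LinearMap.lsmul_apply, smul_eq_mul]
    rw [← hb]; ring
  obtain ⟨g, hg, hxg⟩ := key hmem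
  refine ⟨g, hg, ?_⟩
  simp only [LinearMap.lsmul_apply, smul_eq_mul] at hxg
  rw [mul_sub, hxg]; ring

/-- Core colon lemma: `(J ^ (m + pc) : x^p) ⊆ J ^ m + (0 : x^k)` via Artin–Rees in
`R/(0 : x^k)` where `x` becomes a nonzerodivisor. -/
lemma exists_core_colon [IsNoetherianRing R] (J : Ideal R) (x : R) :
    ∃ c k : ℕ, ∀ (m p : ℕ) (a : R), x ^ p * a ∈ J ^ (m + p * c) →
      ∃ g τ, a = g + τ ∧ g ∈ J ^ m ∧ x ^ k * τ = 0 := by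
  obtain ⟨k, hk⟩ := exists_torsion_bound x
  let A : Ideal R := LinearMap.ker (LinearMap.lsmul R R (x ^ k))
  let π : R →+* R ⧸ A := Ideal.Quotient.mk A
  have hπs : Function.Surjective π := Ideal.Quotient.mk_surjective
  obtain ⟨c, hc⟩ := exists_colon_bound (J.map π) (π x)
  -- x is a nonzerodivisor in R ⧸ A
  have hnzd : ∀ b : R ⧸ A, π x * b = 0 → b = 0 := by
    intro b hb
    obtain ⟨a, rfl⟩ := hπs b
    rw [← map_mul] at hb
    rw [Ideal.Quotient.eq_zero_iff_mem] at hb ⊢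
    simp only [A, LinearMap.mem_ker, LinearMap.lsmul_apply, smul_eq_mul] at hb ⊢
    have h1 : x ^ (k + 1) * a = 0 := by
      rw [pow_succ, mul_assoc, mul_comm x a, ← mul_assoc]
      rw [mul_comm x a] at hb
      calc x ^ k * a * x = x ^ k * (a * x) := by ring
        _ = 0 := hb
    exact hk (k + 1) a (by omega) h1
  -- iterated colon in the quotient
  have hiter : ∀ (p m : ℕ) (b : R ⧸ A), (π x) ^ p * b ∈ (J.map π) ^ (m + p * c) →
      b ∈ (J.map π) ^ m := by
    intro p
    induction p with
    | zero => intro m b hb; simpa using hb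
    | succ p ih =>
      intro m b hb
      have he : m + (p + 1) * c = (m + c) + p * c := by ring
      rw [he] at hb
      have hx : (π x) ^ p * (π x * b) = (π x) ^ (p + 1) * b := by ring
      have h2 := ih (m + c) (π x * b) (by rw [hx]; exact hb)
      obtain ⟨g, hg, hxg⟩ := hc m b h2
      have hb' : b = g := sub_eq_zero.mp (hnzd _ hxg)
      rw [hb']; exact hg
  -- lift back to R
  refine ⟨c, k, fun m p a ha => ?_⟩
  have hmem : (π x) ^ p * (π a) ∈ (J.map π) ^ (m + p * c) := by
    rw [← map_pow, ← map_mul, ← Ideal.map_pow]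
    exact Ideal.mem_map_of_mem π ha
  have hb := hiter p m (π a) hmem
  rw [← Ideal.map_pow] at hb
  obtain ⟨g, hg, hga⟩ := (Ideal.mem_map_iff_of_surjective π hπs).mp hb
  refine ⟨g, a - g, by ring, hg, ?_⟩
  have : π (a - g) = 0 := by rw [map_sub, hga, sub_self]
  rw [Ideal.Quotient.eq_zero_iff_mem] at this
  simpa only [A, LinearMap.mem_ker, LinearMap.lsmul_apply, smul_eq_mul] using this

end RingLemmas

section ModuleLemmas

variable {R : Type u} [CommRing R]

/-- Membership in `A • ⊤` for finitely supported functions is componentwise. -/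
lemma finsupp_smul_top_mem_iff {ι : Type v} (A : Ideal R) (f : ι →₀ R) :
    f ∈ (A • ⊤ : Submodule R (ι →₀ R)) ↔ ∀ i, f i ∈ A := by
  constructor
  · intro hf
    refine Submodule.smul_induction_on hf ?_ ?_
    · intro r hr n _ i
      simp only [Finsupp.coe_smul, Pi.smul_apply, smul_eq_mul]
      exact Ideal.mul_mem_right _ _ hr
    · intro g h hg hh i
      simpa using A.add_mem (hg i) (hh i)
  · intro h
    have hrep : f = f.support.sum fun i => Finsupp.single i (f i) := by
      ext j
      rw [Finsupp.finset_sum_apply]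
      rw [Finset.sum_eq_single j (fun b _ hb => Finsupp.single_eq_of_ne' hb)
        (fun hj => by simp [Finsupp.notMem_support_iff.mp hj])]
      simp
    rw [hrep]
    refine Submodule.sum_mem _ fun i _ => ?_
    have h1 : Finsupp.single i (f i) = (f i) • Finsupp.single i (1 : R) := by
      rw [Finsupp.smul_single, smul_eq_mul, mul_one]
    rw [h1]
    exact Submodule.smul_mem_smul (h i) trivial

/-- Linear maps send `A • ⊤` into `A • ⊤`. -/
lemma map_ideal_smul_top_le {M : Type v} {N : Type w} [AddCommGroup M] [Module R M]
    [AddCommGroup N] [Module R N] (A : Ideal R) (f : M →ₗ[R] N) {z : M}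
    (hz : z ∈ (A • ⊤ : Submodule R M)) : f z ∈ (A • ⊤ : Submodule R N) := by
  have h1 : f z ∈ Submodule.map f (A • ⊤ : Submodule R M) := Submodule.mem_map_of_mem hz
  rw [Submodule.map_smul''] at h1
  exact Submodule.smul_mono le_rfl le_top h1

/-- Decomposition of elements of a projective module whose `x ^ p` multiple is deep in
the `J`-adic filtration, given the corresponding ring-level colon bound. -/
lemma projective_decompose {Q : Type v} [AddCommGroup Q] [Module R Q]
    (hp : Module.Projective R Q) (J : Ideal R) (x : R) (c k : ℕ)
    (hcolon : ∀ (m p : ℕ) (a : R), x ^ p * a ∈ J ^ (m + p * c) →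
      ∃ g τ, a = g + τ ∧ g ∈ J ^ m ∧ x ^ k * τ = 0)
    (m p : ℕ) (z : Q) (hz : x ^ p • z ∈ (J ^ (m + p * c) • ⊤ : Submodule R Q)) :
    ∃ γ τ : Q, z = γ + τ ∧ γ ∈ (J ^ m • ⊤ : Submodule R Q) ∧ x ^ k • τ = 0 := by
  classical
  obtain ⟨s, hs⟩ := Module.projective_def.mp hp
  set π : (Q →₀ R) →ₗ[R] Q := Finsupp.linearCombination R id with hπ
  have hsz : ∀ q : Q, π (s q) = q := hs
  set f : Q →₀ R := s z with hf
  have hfmem : x ^ p • f ∈ (J ^ (m + p * c) • ⊤ : Submodule R (Q →₀ R)) := by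
    rw [hf, ← map_smul]
    exact map_ideal_smul_top_le _ s hz
  have hcomp : ∀ i, x ^ p * f i ∈ J ^ (m + p * c) := by
    intro i
    have h2 := (finsupp_smul_top_mem_iff _ _).mp hfmem i
    simpa using h2
  choose g τ hgt hgmem hτ using fun i => hcolon m p (f i) (hcomp i)
  set γF : Q →₀ R := f.support.sum fun i => Finsupp.single i (g i) with hγF
  have hγFi : ∀ i, γF i = if i ∈ f.support then g i else 0 := by
    intro i
    rw [hγF, Finsupp.finset_sum_apply]
    by_cases hi : i ∈ f.support
    · rw [Finset.sum_eq_single i (fun b _ hb => Finsupp.single_eq_of_ne' hb)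
        (fun h => absurd hi h)]
      simp [hi]
    · simp only [hi, if_false]
      refine Finset.sum_eq_zero fun b hb => ?_
      exact Finsupp.single_eq_of_ne' (fun h => hi (h ▸ hb))
  have hγFmem : γF ∈ (J ^ m • ⊤ : Submodule R (Q →₀ R)) := by
    rw [finsupp_smul_top_mem_iff]
    intro i
    rw [hγFi i]
    by_cases hi : i ∈ f.support
    · simpa [hi] using hgmem i
    · simp [hi]
  have hτF : x ^ k • (f - γF) = 0 := by
    ext i
    simp only [Finsupp.coe_smul, Pi.smul_apply, Finsupp.coe_sub, Pi.sub_apply,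
      Finsupp.coe_zero, Pi.zero_apply, smul_eq_mul]
    rw [hγFi i]
    by_cases hi : i ∈ f.support
    · simp only [hi, if_true]
      have h2 : f i - g i = τ i := by rw [hgt i]; ring
      rw [h2]; exact hτ i
    · simp only [hi, if_false, sub_zero]
      rw [Finsupp.notMem_support_iff.mp hi, mul_zero]
  refine ⟨π γF, π (f - γF), ?_, ?_, ?_⟩
  · rw [← map_add, add_sub_cancel, hf, hsz]
  · exact map_ideal_smul_top_le _ π hγFmem
  · rw [← map_smul, hτF, map_zero]

end ModuleLemmas

section Helpers

variable {R : Type u} [CommRing R]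

lemma span_singleton_smul_top_mem {M : Type v} [AddCommGroup M] [Module R M] (r : R) (b : M)
    (hb : b ∈ (Ideal.span {r} • ⊤ : Submodule R M)) : ∃ a, b = r • a := by
  refine Submodule.smul_induction_on hb ?_ ?_
  · intro s hs n _
    obtain ⟨q, hq⟩ := Ideal.mem_span_singleton'.mp hs
    exact ⟨q • n, by rw [← hq, mul_smul, smul_comm]⟩
  · rintro _ _ ⟨a₁, rfl⟩ ⟨a₂, rfl⟩
    exact ⟨a₁ + a₂, by rw [smul_add]⟩

end Helpers

section MainInduction

variable {R : Type u} [CommRing R]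

lemma main_V [IsNoetherianRing R]
    (Q : ℕ → Type v) [∀ j, AddCommGroup (Q j)] [∀ j, Module R (Q j)]
    (d : ∀ j, Q (j + 1) →ₗ[R] Q j)
    (hproj : ∀ j, Module.Projective R (Q j))
    (hdd : ∀ j (y : Q (j + 2)), d j (d (j + 1) y) = 0)
    (hex : ∀ j (y : Q (j + 1)), d j y = 0 → ∃ w, d (j + 1) w = y)
    (L : List R) :
    ∃ s : ℕ → ℕ, ∀ t i (y : Q (i + 1)), L.length ≤ i →
      d i y ∈ (Ideal.span {a | a ∈ L} ^ (s t) • ⊤ : Submodule R (Q i)) →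
      ∃ w, y - d (i + 1) w ∈ (Ideal.span {a | a ∈ L} ^ t • ⊤ : Submodule R (Q (i + 1))) := by
  induction L with
  | nil =>
    refine ⟨fun _ => 1, fun t i y _ hy => ?_⟩
    have hset : {a : R | a ∈ ([] : List R)} = ∅ := by ext a; simp
    rw [hset, Ideal.span_empty, pow_one, Submodule.bot_smul, Submodule.mem_bot] at hy
    obtain ⟨w, hw⟩ := hex i y hy
    exact ⟨w, by rw [hw, sub_self]; exact Submodule.zero_mem _⟩
  | cons x L ih =>
    obtain ⟨s₀, hs₀⟩ := ih
    obtain ⟨c, k, hcolon⟩ := exists_core_colon (Ideal.span {a | a ∈ L}) x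
    set J : Ideal R := Ideal.span {a | a ∈ L} with hJ
    set J' : Ideal R := Ideal.span {a | a ∈ (x :: L : List R)} with hJ'def
    have hJ' : J' = Ideal.span {x} ⊔ J := by
      rw [hJ'def, hJ]
      have h1 : {a : R | a ∈ (x :: L : List R)} = insert x {a : R | a ∈ L} := by
        ext a; simp [List.mem_cons]
      rw [h1, Ideal.span_insert]
    have hJleJ' : J ≤ J' := by rw [hJ']; exact le_sup_right
    have hxJ' : x ∈ J' := by
      rw [hJ']
      exact Submodule.mem_sup_left (Ideal.subset_span rfl)
    refine ⟨fun t => (2 * t + 2 * k + 2) +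
      (s₀ (s₀ t) + s₀ t + (2 * t + 2 * k + 2) * c), fun t i y hi hy => ?_⟩
    cases i with
    | zero => simp at hi
    | succ i₀ =>
      have hi₀ : L.length ≤ i₀ := by simpa using hi
      set p : ℕ := 2 * t + 2 * k + 2 with hp
      set e : ℕ := 2 * t + k + 2 with he
      set mv : ℕ := s₀ (s₀ t) + s₀ t with hmv
      set W : ℕ := mv + p * c with hW
      -- split d y = x ^ p • α + β
      have hsup : J' ^ (p + W) ≤ Ideal.span {x ^ p} ⊔ J ^ W := by
        rw [hJ', ← Ideal.span_singleton_pow]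
        exact Ideal.sup_pow_add_le_pow_sup_pow
      have hy2 : d (i₀ + 1) y ∈ (J' ^ (p + W) • ⊤ : Submodule R (Q (i₀ + 1))) := by
        convert hy using 3
      have hy' : d (i₀ + 1) y ∈ (Ideal.span {x ^ p} ⊔ J ^ W) • ⊤ :=
        Submodule.smul_mono hsup le_rfl hy2
      rw [Submodule.sup_smul] at hy'
      obtain ⟨b₁, hb₁, β, hβ, hsum⟩ := Submodule.mem_sup.mp hy'
      obtain ⟨α, hα⟩ := span_singleton_smul_top_mem _ _ hb₁
      -- x ^ p • d i₀ α = - d i₀ β ∈ J ^ W • ⊤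
      have hkey : x ^ p • d i₀ α ∈ (J ^ W • ⊤ : Submodule R (Q i₀)) := by
        have h0 : d i₀ (d (i₀ + 1) y) = 0 := hdd i₀ y
        rw [← hsum, map_add] at h0
        have hb : d i₀ b₁ = x ^ p • d i₀ α := by rw [hα, map_smul]
        have h2 : x ^ p • d i₀ α = - d i₀ β := by
          rw [← hb]
          exact eq_neg_of_add_eq_zero_left h0
        rw [h2]
        exact Submodule.neg_mem _ (map_ideal_smul_top_le _ (d i₀) hβ)
      -- decompose d i₀ α = γ + τ
      obtain ⟨γ, τ, hgt, hγ, hτ⟩ := projective_decompose (hproj i₀) J x c k hcolon mv p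
        (d i₀ α) (by rw [← hW]; exact hkey)
      -- first application of the induction hypothesis
      have hα' : d i₀ (x ^ k • α) ∈ (J ^ (s₀ (s₀ t)) • ⊤ : Submodule R (Q i₀)) := by
        have h3 : x ^ k • d i₀ α = x ^ k • γ := by rw [hgt, smul_add, hτ, add_zero]
        rw [map_smul, h3]
        have hmem : x ^ k • γ ∈ (J ^ mv • ⊤ : Submodule R (Q i₀)) := Submodule.smul_mem _ _ hγ
        exact Submodule.smul_mono (Ideal.pow_le_pow_right (by omega)) le_rfl hmem
      obtain ⟨v, hv⟩ := hs₀ (s₀ t) i₀ (x ^ k • α) hi₀ hα'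
      -- second application of the induction hypothesis
      have hdθ : d (i₀ + 1) (y - x ^ e • v) ∈
          (J ^ (s₀ t) • ⊤ : Submodule R (Q (i₀ + 1))) := by
        have hek : x ^ e * x ^ k = x ^ p := by rw [← pow_add]; congr 1; omega
        have hsplit : d (i₀ + 1) (y - x ^ e • v) =
            x ^ e • (x ^ k • α - d (i₀ + 1) v) + β := by
          rw [map_sub, ← hsum, hα, map_smul, smul_sub, smul_smul, hek]
          abel
        rw [hsplit]
        refine Submodule.add_mem _ ?_ ?_
        · exact Submodule.smul_mem _ _ hv
        · exact Submodule.smul_mono (Ideal.pow_le_pow_right (by omega)) le_rfl hβ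
      obtain ⟨w, hw⟩ := hs₀ t (i₀ + 1) (y - x ^ e • v) (by omega) hdθ
      refine ⟨w, ?_⟩
      have hfinal : y - d (i₀ + 1 + 1) w =
          ((y - x ^ e • v) - d (i₀ + 1 + 1) w) + x ^ e • v := by abel
      rw [hfinal]
      refine Submodule.add_mem _ ?_ ?_
      · exact Submodule.smul_mono (Ideal.pow_right_mono hJleJ' t) le_rfl hw
      · refine Submodule.smul_mem_smul ?_ trivial
        exact Ideal.pow_le_pow_right (by omega) (Ideal.pow_mem_pow hxJ' e)

end MainInduction

section CompletionBridge

open AdicCompletion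

variable {R : Type u} [CommRing R]

lemma completion_exact [IsNoetherianRing R] (I : Ideal R)
    (Q : ℕ → Type v) [∀ j, AddCommGroup (Q j)] [∀ j, Module R (Q j)]
    (d : ∀ j, Q (j + 1) →ₗ[R] Q j)
    (hproj : ∀ j, Module.Projective R (Q j))
    (hdd : ∀ j (y : Q (j + 2)), d j (d (j + 1) y) = 0)
    (hex : ∀ j (y : Q (j + 1)), d j y = 0 → ∃ w, d (j + 1) w = y)
    (L : List R) (hspan : Ideal.span {a | a ∈ L} = I)
    (i : ℕ) (hi : L.length ≤ i)
    (z : AdicCompletion I (Q (i + 1))) (hz : AdicCompletion.map I (d i) z = 0) :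
    ∃ w : AdicCompletion I (Q (i + 2)), AdicCompletion.map I (d (i + 1)) w = z := by
  obtain ⟨s', hs'⟩ := main_V Q d hproj hdd hex L
  rw [hspan] at hs'
  set s : ℕ → ℕ := fun t => max (s' t) (t + 1) with hsdef
  have hs : ∀ t i' (y : Q (i' + 1)), L.length ≤ i' →
      d i' y ∈ (I ^ (s t) • ⊤ : Submodule R (Q i')) →
      ∃ w, y - d (i' + 1) w ∈ (I ^ t • ⊤ : Submodule R (Q (i' + 1))) := by
    intro t i' y h1 h2
    exact hs' t i' y h1
      (Submodule.smul_mono (Ideal.pow_le_pow_right (le_max_left _ _)) le_rfl h2)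
  have hst : ∀ t, t < s t := fun t => lt_of_lt_of_le (Nat.lt_succ_self t) (le_max_right _ _)
  obtain ⟨a, rfl⟩ := AdicCompletion.mk_surjective I _ z
  have ha : ∀ t, d i (a t) ∈ (I ^ t • ⊤ : Submodule R (Q i)) := by
    intro t
    have h1 : (AdicCompletion.map I (d i) (AdicCompletion.mk I _ a)).val t = 0 := by
      rw [hz]; rfl
    rw [AdicCompletion.map_mk] at h1
    rw [AdicCompletion.mk_apply_coe] at h1
    rw [Submodule.mkQ_apply, Submodule.Quotient.mk_eq_zero] at h1
    exact h1
  have hcauchy : ∀ {m n : ℕ}, m ≤ n → a m - a n ∈ (I ^ m • ⊤ : Submodule R (Q (i + 1))) :=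
    fun {m n} hmn => SModEq.sub_mem.mp (a.property hmn)
  have hlev : ∀ t, ∃ w : Q (i + 2),
      a (s t) - d (i + 1) w ∈ (I ^ t • ⊤ : Submodule R (Q (i + 1))) :=
    fun t => hs t i (a (s t)) hi (ha (s t))
  -- the tower of indices
  let T : ℕ → ℕ := fun j => Nat.rec 0 (fun _ Tj => s Tj + Tj + 1) j
  have hTs : ∀ j, T (j + 1) = s (T j) + T j + 1 := fun j => rfl
  have hTmono : ∀ j, j ≤ T j := by
    intro j
    induction j with
    | zero => exact Nat.zero_le _
    | succ j ihj => rw [hTs]; omega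
  have hTle : ∀ j, T j ≤ T (j + 1) := fun j => by rw [hTs]; omega
  -- invariant
  set Inv : ℕ → Q (i + 2) → Prop := fun j w =>
    a (T (j + 1)) - d (i + 1) w ∈ (I ^ (T (j + 1)) • ⊤ : Submodule R (Q (i + 1)))
    with hInv
  have hbase : ∀ j : ℕ, ∃ w, Inv j w := by
    intro j
    obtain ⟨w, hw⟩ := hlev (T (j + 1))
    refine ⟨w, ?_⟩
    have hc : a (T (j + 1)) - a (s (T (j + 1))) ∈
        (I ^ (T (j + 1)) • ⊤ : Submodule R (Q (i + 1))) :=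
      hcauchy (le_of_lt (hst _))
    have h2 := Submodule.add_mem _ hc hw
    rw [sub_add_sub_cancel] at h2
    exact h2
  have hstep : ∀ j (wj : Q (i + 2)), Inv j wj →
      ∃ w', Inv (j + 1) w' ∧ w' - wj ∈ (I ^ (T j) • ⊤ : Submodule R (Q (i + 2))) := by
    intro j wj hwj
    obtain ⟨w'', hw''⟩ := hbase (j + 1)
    have hde : d (i + 1) (w'' - wj) ∈ (I ^ (s (T j)) • ⊤ : Submodule R (Q (i + 1))) := by
      have h3 : a (T (j + 1)) - a (T (j + 2)) ∈
          (I ^ (T (j + 1)) • ⊤ : Submodule R (Q (i + 1))) := hcauchy (hTle (j + 1))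
      have h4 : d (i + 1) (w'' - wj) =
          (a (T (j + 1)) - d (i + 1) wj) - (a (T (j + 1)) - a (T (j + 2))) -
            (a (T (j + 2)) - d (i + 1) w'') := by
        rw [map_sub]; abel
      have hle1 : (I ^ (T (j + 1)) • ⊤ : Submodule R (Q (i + 1))) ≤ I ^ (s (T j)) • ⊤ :=
        Submodule.smul_mono (Ideal.pow_le_pow_right (by rw [hTs]; omega)) le_rfl
      have hle2 : (I ^ (T (j + 2)) • ⊤ : Submodule R (Q (i + 1))) ≤ I ^ (s (T j)) • ⊤ := by
        refine Submodule.smul_mono (Ideal.pow_le_pow_right ?_) le_rfl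
        have h1 : s (T j) ≤ T (j + 1) := by rw [hTs j]; omega
        exact le_trans h1 (hTle (j + 1))
      rw [h4]
      exact Submodule.sub_mem _ (Submodule.sub_mem _ (hle1 hwj) (hle1 h3)) (hle2 hw'')
    obtain ⟨h, hh⟩ := hs (T j) (i + 1) (w'' - wj) (le_trans hi (Nat.le_succ i)) hde
    refine ⟨w'' - d (i + 2) h, ?_, ?_⟩
    · show a (T (j + 2)) - d (i + 1) (w'' - d (i + 2) h) ∈ _
      have h5 : d (i + 1) (w'' - d (i + 2) h) = d (i + 1) w'' := by
        rw [map_sub, hdd, sub_zero]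
      rw [h5]
      exact hw''
    · have h6 : w'' - d (i + 2) h - wj = w'' - wj - d (i + 2) h := by abel
      rw [h6]
      exact hh
  -- build the sequence of approximate solutions
  let Wseq : ∀ j : ℕ, {w : Q (i + 2) // Inv j w} := fun j =>
    Nat.rec ⟨(hbase 0).choose, (hbase 0).choose_spec⟩
      (fun j' pj => ⟨(hstep j' pj.1 pj.2).choose, (hstep j' pj.1 pj.2).choose_spec.1⟩) j
  have hWstep : ∀ j, (Wseq (j + 1)).1 - (Wseq j).1 ∈
      (I ^ (T j) • ⊤ : Submodule R (Q (i + 2))) :=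
    fun j => (hstep j (Wseq j).1 (Wseq j).2).choose_spec.2
  set V : ℕ → Q (i + 2) := fun j => (Wseq j).1 with hV
  have hVc : ∀ j, V j ≡ V (j + 1) [SMOD (I ^ j • ⊤ : Submodule R (Q (i + 2)))] := by
    intro j
    rw [SModEq.sub_mem]
    have h7 := Submodule.neg_mem _ (hWstep j)
    rw [neg_sub] at h7
    exact Submodule.smul_mono (Ideal.pow_le_pow_right (hTmono j)) le_rfl h7
  refine ⟨AdicCompletion.mk I (Q (i + 2)) (AdicCompletion.AdicCauchySequence.mk I (Q (i + 2)) V hVc), ?_⟩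
  rw [AdicCompletion.map_mk]
  apply AdicCompletion.ext
  intro t
  rw [AdicCompletion.mk_apply_coe, AdicCompletion.mk_apply_coe]
  simp only [AdicCompletion.AdicCauchySequence.map_apply_coe, Submodule.mkQ_apply]
  rw [Submodule.Quotient.eq]
  -- d (i+1) (V t) - a t ∈ I^t • ⊤
  have h8 : a (T (t + 1)) - d (i + 1) (V t) ∈
      (I ^ t • ⊤ : Submodule R (Q (i + 1))) := by
    refine Submodule.smul_mono (Ideal.pow_le_pow_right ?_) le_rfl ((Wseq t).2)
    have := hTmono (t + 1)
    omega
  have h9 : a t - a (T (t + 1)) ∈ (I ^ t • ⊤ : Submodule R (Q (i + 1))) :=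
    hcauchy (le_trans (Nat.le_succ t) (hTmono (t + 1)))
  have h10 := Submodule.add_mem _ h9 h8
  rw [sub_add_sub_cancel] at h10
  have h11 := Submodule.neg_mem _ h10
  rw [neg_sub] at h11
  exact h11

end CompletionBridge

/-- If `a` is an ideal of a commutative noetherian ring `R` generated by
`n` elements, then for every `R`-module `M` and every `i > n`, the `i`-th left derived
local homology module `H_i(LΛ^a(M)) = L_iΛ^a(M)` vanishes. -/
theorem leftDerived_adicCompletion_vanishes
    {R : Type u} [CommRing R] [IsNoetherianRing R] (I : Ideal R)
    (n : ℕ) (s : Finset R) (hcard : s.card = n) (hspan : Ideal.span (s : Set R) = I)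
    (M : ModuleCat.{u} R) (i : ℕ) (hi : n < i) :
    Limits.IsZero (((adicCompletionFunctor R I).leftDerived i).obj M) := by
  cases i with
  | zero => omega
  | succ i₀ =>
    have hni : n ≤ i₀ := by omega
    let P : ProjectiveResolution M := (HasProjectiveResolution.out (Z := M)).some
    refine Limits.IsZero.of_iso ?_ (P.isoLeftDerivedObj (adicCompletionFunctor R I) (i₀ + 1))
    erw [← HomologicalComplex.exactAt_iff_isZero_homology]
    rw [HomologicalComplex.exactAt_iff' _ (i₀ + 2) (i₀ + 1) i₀ (by simp) (by simp)]
    rw [ShortComplex.moduleCat_exact_iff]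
    -- element-level data of the resolution
    have hproj : ∀ j, Module.Projective R ↥(P.complex.X j) := fun j =>
      by haveI := P.projective j; exact ModuleCat.projective_of_module_projective _
    have hdd : ∀ j (y : ↥(P.complex.X (j + 2))),
        (P.complex.d (j + 2) (j + 1) ≫ P.complex.d (j + 1) j) y = 0 := by
      intro j y
      rw [P.complex.d_comp_d (j + 2) (j + 1) j]
      rfl
    have hex : ∀ j (y : ↥(P.complex.X (j + 1))), (P.complex.d (j + 1) j) y = 0 →
        ∃ w, (P.complex.d (j + 2) (j + 1)) w = y := by
      intro j
      have h := P.complex_exactAt_succ j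
      rw [HomologicalComplex.exactAt_iff' _ (j + 2) (j + 1) j (by simp) (by simp)] at h
      exact fun y hy => (ShortComplex.moduleCat_exact_iff _).mp h y hy
    have hsetL : {a : R | a ∈ s.toList} = (s : Set R) := by
      ext a; simp
    have hspanL : Ideal.span {a : R | a ∈ s.toList} = I := by rw [hsetL, hspan]
    have hlen : s.toList.length ≤ i₀ := by
      rw [Finset.length_toList, hcard]; exact hni
    intro z hz
    obtain ⟨w, hw⟩ := completion_exact I (fun j => ↥(P.complex.X j))
      (fun j => (P.complex.d (j + 1) j).hom)
      hproj (fun j y => hdd j y) hex s.toList hspanL i₀ hlen z hz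
    exact ⟨w, hw⟩
end

section
/- Let R be a commutative noetherian ring and a an ideal. If G is an exact (acyclic) complex of flat R-modules, then the termwise a-adic completion Λ^a(G) is also exact. -/
open CategoryTheory

universe u

namespace AdicFlatExact




variable {R : Type u} [CommRing R]

/-- The "box" ideal `(a₁ⁿ, …, a_cⁿ)` for a list of elements. -/
def Jb : List R → ℕ → Ideal R
  | [], _ => ⊥
  | a :: l, n => Ideal.span {a ^ n} ⊔ Jb l n

lemma Jb_antitone (l : List R) {m n : ℕ} (h : n ≤ m) : Jb l m ≤ Jb l n := by
  induction l with
  | nil => exact le_rfl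
  | cons a l ih =>
    refine sup_le_sup ?_ ih
    rw [Ideal.span_singleton_le_span_singleton]
    exact pow_dvd_pow a h

lemma Jb_le_pow (l : List R) (n : ℕ) : Jb l n ≤ (Ideal.span {x | x ∈ l}) ^ n := by
  induction l with
  | nil => exact bot_le
  | cons a l ih =>
    refine sup_le ?_ (ih.trans (Ideal.pow_right_mono ?_ n))
    · rw [Ideal.span_singleton_le_iff_mem]
      exact Ideal.pow_mem_pow (Ideal.subset_span (by simp)) n
    · exact Ideal.span_mono (fun x hx => by simpa using Or.inr hx)

lemma pow_le_Jb (l : List R) (n : ℕ) :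
    ∃ e : ℕ, (Ideal.span {x | x ∈ l}) ^ e ≤ Jb l n := by
  induction l with
  | nil =>
    refine ⟨1, ?_⟩
    have : ({x | x ∈ ([] : List R)} : Set R) = ∅ := by simp
    rw [this, Ideal.span_empty, pow_one]
    exact le_rfl
  | cons a l ih =>
    obtain ⟨e, he⟩ := ih
    refine ⟨n + e, ?_⟩
    have hspan : Ideal.span {x | x ∈ a :: l} = Ideal.span {a} ⊔ Ideal.span {x | x ∈ l} := by
      rw [← Ideal.span_union]
      congr 1
      ext x
      simp
    rw [hspan]
    refine (Ideal.sup_pow_add_le_pow_sup_pow).trans (sup_le_sup ?_ he)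
    rw [Ideal.span_singleton_pow]


variable {R : Type u} [CommRing R]

lemma ideal_smul_top (A : Ideal R) : A • (⊤ : Submodule R R) = A := by
  rw [Ideal.smul_eq_mul, Ideal.mul_top]

/-- Stabilization of `b`-power torsion in a noetherian ring. -/
lemma exists_torsion_stab [IsNoetherianRing R] (b : R) :
    ∃ t0 : ℕ, ∀ r : R, ∀ t : ℕ, b ^ (t0 + t) * r = 0 → b ^ t0 * r = 0 := by
  have hmono : Monotone (fun t : ℕ => LinearMap.ker (LinearMap.lsmul R R (b ^ t))) := by
    intro s t hst
    intro r hr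
    simp only [LinearMap.mem_ker, LinearMap.lsmul_apply, smul_eq_mul] at hr ⊢
    calc b ^ t * r = b ^ (t - s) * (b ^ s * r) := by rw [← mul_assoc, ← pow_add]; congr 2; omega
    _ = 0 := by rw [hr, mul_zero]
  obtain ⟨t0, ht0⟩ := monotone_stabilizes_iff_noetherian.mpr inferInstance
    ⟨fun t => LinearMap.ker (LinearMap.lsmul R R (b ^ t)), hmono⟩
  refine ⟨t0, fun r t hr => ?_⟩
  have h := ht0 (t0 + t) (by omega)
  simp only [OrderHom.coe_mk] at h
  have hr' : r ∈ LinearMap.ker (LinearMap.lsmul R R (b ^ (t0 + t))) := by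
    simpa using hr
  rw [← h] at hr'
  simpa using hr'

/-- Key division lemma (uniform Artin–Rees division by powers of `b`). -/
lemma division [IsNoetherianRing R] (b : R) (A : Ideal R) (N n ℓ : ℕ) :
    ∃ m : ℕ, n ≤ m ∧ ℓ ≤ m ∧ ∀ r : R, b ^ m * r ∈ A ^ m → b ^ (m - n) * r ∈ A ^ N := by
  obtain ⟨t0, ht0⟩ := exists_torsion_stab b
  -- the torsion ideal
  set K : Ideal R := LinearMap.ker (LinearMap.lsmul R R (b ^ t0)) with hK
  set M := R ⧸ (K : Submodule R R) with hM
  set π : R →ₗ[R] M := (K : Submodule R R).mkQ with hπ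
  -- b is regular on M
  have hreg : ∀ x : M, b • x = 0 → x = 0 := by
    intro x hx
    obtain ⟨r, rfl⟩ := (K : Submodule R R).mkQ_surjective x
    have : b • (K : Submodule R R).mkQ r = (K : Submodule R R).mkQ (b * r) := by
      rw [← map_smul]; rfl
    rw [this, Submodule.mkQ_apply, Submodule.Quotient.mk_eq_zero] at hx
    have hbr : b ^ t0 * (b * r) = 0 := hx
    have : b ^ (t0 + 1) * r = 0 := by
      rw [pow_succ, mul_assoc]; exact hbr
    rw [Submodule.mkQ_apply, Submodule.Quotient.mk_eq_zero]
    exact ht0 r 1 (by simpa using this)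
  -- Artin-Rees for span {π b} in M
  obtain ⟨k, hk⟩ := Ideal.exists_pow_inf_eq_pow_smul A
    (Submodule.span R {π b} : Submodule R M)
  have hπs : ∀ (c r : R), c • π r = π (c * r) := by
    intro c r
    rw [← map_smul]
    rfl
  -- single division step
  have hstep : ∀ (s : ℕ) (x : M), b • x ∈ A ^ s • (⊤ : Submodule R M) →
      x ∈ A ^ (s - k) • (⊤ : Submodule R M) := by
    intro s x hx
    by_cases hs : s < k
    · have : s - k = 0 := by omega
      rw [this, pow_zero, Ideal.one_eq_top, Submodule.top_smul]
      exact Submodule.mem_top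
    · have hbx : b • x ∈ Submodule.span R {π b} := by
        obtain ⟨r, rfl⟩ := (K : Submodule R R).mkQ_surjective x
        have hb : b • π r = r • π b := by
          rw [hπs, hπs, mul_comm]
        rw [show (K : Submodule R R).mkQ r = π r from rfl, hb]
        exact Submodule.smul_mem _ _ (Submodule.mem_span_singleton_self _)
      have h1 : b • x ∈ A ^ (s - k) • (A ^ k • ⊤ ⊓ Submodule.span R {π b}) := by
        rw [← hk s (by omega)]
        exact ⟨hx, hbx⟩
      have h2 : b • x ∈ A ^ (s - k) • Submodule.span R {π b} :=
        Submodule.smul_mono le_rfl inf_le_right h1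
      obtain ⟨a, ha, hab⟩ := Submodule.mem_smul_span_singleton.mp h2
      -- b • x = a • π b = b • π a
      have : b • (x - π a) = 0 := by
        have hπab : a • π b = b • π a := by rw [hπs, hπs, mul_comm]
        rw [smul_sub, ← hab, hπab, sub_self]
      have hx' : x = π a := by
        have := hreg _ this
        rwa [sub_eq_zero] at this
      rw [hx']
      have : π a = a • π 1 := by rw [hπs, mul_one]
      rw [this]
      exact Submodule.smul_mem_smul ha Submodule.mem_top
  -- iterated division
  have hiter : ∀ (j : ℕ) (s : ℕ) (x : M), b ^ j • x ∈ A ^ s • (⊤ : Submodule R M) →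
      x ∈ A ^ (s - j * k) • (⊤ : Submodule R M) := by
    intro j
    induction j with
    | zero => intro s x hx; simpa using hx
    | succ j ih =>
      intro s x hx
      have h1 := ih s (b • x) (by rw [smul_smul, ← pow_succ]; exact hx)
      have h2 := hstep (s - j * k) x h1
      have : s - j * k - k = s - (j + 1) * k := by
        rw [Nat.succ_mul]; omega
      rwa [this] at h2
  -- assemble
  refine ⟨max (max ℓ (n + t0)) (N + (n + t0) * k), by omega, by omega, ?_⟩
  set m := max (max ℓ (n + t0)) (N + (n + t0) * k) with hm
  intro r hr
  have hmnt : n + t0 ≤ m := by omega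
  -- π (b^(m - (n+t0)) * r) satisfies b^(n+t0) • _ ∈ A^m • ⊤
  have h1 : b ^ (n + t0) • π (b ^ (m - (n + t0)) * r) ∈ A ^ m • (⊤ : Submodule R M) := by
    have heq : b ^ (n + t0) • π (b ^ (m - (n + t0)) * r) = π (b ^ m * r) := by
      rw [← map_smul]
      congr 1
      rw [smul_eq_mul, ← mul_assoc, ← pow_add]
      congr 2
      omega
    rw [heq]
    have : π (b ^ m * r) ∈ Submodule.map π (A ^ m • (⊤ : Submodule R R)) :=
      Submodule.mem_map_of_mem (by rw [ideal_smul_top]; exact hr)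
    rwa [Submodule.map_smul'', Submodule.map_top, Submodule.range_mkQ] at this
  have h2 := hiter (n + t0) m _ h1
  have h3 : A ^ (m - (n + t0) * k) • (⊤ : Submodule R M) ≤ A ^ N • ⊤ :=
    Submodule.smul_mono_left (Ideal.pow_le_pow_right (by omega))
  have h4 : π (b ^ (m - (n + t0)) * r) ∈ Submodule.map π (A ^ N • (⊤ : Submodule R R)) := by
    rw [Submodule.map_smul'', Submodule.map_top, Submodule.range_mkQ]
    exact h3 h2
  -- pull back
  have h5 : b ^ (m - (n + t0)) * r ∈ A ^ N • (⊤ : Submodule R R) ⊔ (K : Submodule R R) := by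
    have := Submodule.mem_map.mp h4
    obtain ⟨y, hy, hyeq⟩ := this
    have : b ^ (m - (n + t0)) * r - y ∈ (K : Submodule R R) := by
      rw [← Submodule.Quotient.eq]
      exact ((Submodule.mkQ_apply _ _).symm.trans hyeq).symm.trans (Submodule.mkQ_apply _ _)
    have : b ^ (m - (n + t0)) * r = y + (b ^ (m - (n + t0)) * r - y) := by ring
    rw [this]
    exact Submodule.add_mem_sup hy ‹_›
  rw [ideal_smul_top] at h5
  obtain ⟨a, ha, κ, hκ, heq⟩ := Submodule.mem_sup.mp h5
  have hκ0 : b ^ t0 * κ = 0 := hκ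
  have : b ^ (m - n) * r = b ^ t0 * (b ^ (m - (n + t0)) * r) := by
    rw [← mul_assoc, ← pow_add]
    congr 2
    omega
  rw [this, ← heq, mul_add, hκ0, add_zero]
  exact Ideal.mul_mem_left _ _ ha




variable {R : Type u} [CommRing R] {M : Type u} [AddCommGroup M] [Module R M]

/-- In a flat module, `β`-division of ideal multiples: if `β • x ∈ C • M` then
`x ∈ (C : β) • M`. -/
lemma flat_colon [Module.Flat R M] (C : Ideal R) (β : R) (x : M)
    (hx : β • x ∈ C • (⊤ : Submodule R M)) :
    x ∈ (C.colon (Ideal.span {β})) • (⊤ : Submodule R M) := by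
  -- finite representation of β • x
  have htop : (⊤ : Submodule R M) = Submodule.span R (Set.range (id : M → M)) := by
    simp
  rw [htop] at hx
  rw [Submodule.mem_ideal_smul_span_iff_exists_sum] at hx
  obtain ⟨a, ha, hsum⟩ := hx
  classical
  -- build the relation ∑ f i • z i = 0 over ι = Option a.support
  set ι : Type u := Option ↥(a.support) with hι
  set f : ι → R := fun i => Option.elim i β (fun j => -(a j)) with hf
  set z : ι → M := fun i => Option.elim i x (fun j => (j : M)) with hz
  have hsum' : ∑ i : ↥(a.support), a ↑i • (↑i : M) = β • x := by
    have hcs := Finset.sum_coe_sort a.support (fun m => a m • (m : M))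
    rw [hcs]
    simpa [Finsupp.sum] using hsum
  have hrel : ∑ i : ι, f i • z i = 0 := by
    rw [Fintype.sum_option]
    have h1 : ∑ i : ↥(a.support), f (some i) • z (some i)
        = -(β • x) := by
      rw [← hsum', ← Finset.sum_neg_distrib]
      refine Finset.sum_congr rfl fun i _ => ?_
      simp [hf, hz, neg_smul]
    rw [h1]
    show β • x + -(β • x) = 0
    abel
  obtain ⟨κ, aa, y, hxy, hrel2⟩ := Module.Flat.isTrivialRelation_of_sum_smul_eq_zero hrel
  have hx0 : x = ∑ j, aa none j • y j := hxy none
  rw [hx0]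
  refine Submodule.sum_mem _ fun j _ => ?_
  refine Submodule.smul_mem_smul ?_ Submodule.mem_top
  rw [Ideal.mem_colon_span_singleton]
  have := hrel2 j
  rw [Fintype.sum_option] at this
  have hβ : β * aa none j = ∑ i : ↥(a.support), a i * aa (some i) j := by
    have h2 : ∑ i : ↥(a.support), f (some i) * aa (some i) j
        = -(∑ i : ↥(a.support), a i * aa (some i) j) := by
      rw [← Finset.sum_neg_distrib]
      refine Finset.sum_congr rfl fun i _ => ?_
      simp [hf, neg_mul]
    have h3 : f none = β := rfl
    rw [h2, h3] at this
    rw [← sub_eq_zero]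
    simpa [sub_eq_add_neg] using this
  rw [mul_comm, hβ]
  exact Ideal.sum_mem _ fun i _ => Ideal.mul_mem_right _ _ (ha i)


section Helpers

variable {R : Type u} [CommRing R] {M : Type u} [AddCommGroup M] [Module R M]
  {N : Type u} [AddCommGroup N] [Module R N]

lemma map_mem_smul_top (I : Ideal R) (f : M →ₗ[R] N) {x : M}
    (h : x ∈ I • (⊤ : Submodule R M)) : f x ∈ I • (⊤ : Submodule R N) := by
  have : Submodule.map f (I • ⊤) ≤ I • ⊤ := by
    rw [Submodule.map_smul'']
    exact Submodule.smul_mono le_rfl le_top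
  exact this (Submodule.mem_map_of_mem h)

lemma smul_mem_smul_top_of {C1 C2 : Ideal R} {c : R} (hc : ∀ r ∈ C1, c * r ∈ C2) {x : M}
    (h : x ∈ C1 • (⊤ : Submodule R M)) : c • x ∈ C2 • (⊤ : Submodule R M) := by
  refine Submodule.smul_induction_on h (fun r hr m _ => ?_) (fun y z hy hz => ?_)
  · rw [smul_smul]
    exact Submodule.smul_mem_smul (hc r hr) Submodule.mem_top
  · rw [smul_add]
    exact Submodule.add_mem _ hy hz

lemma eq_smul_of_mem_span_singleton_smul_top {c : R} {x : M}
    (h : x ∈ (Ideal.span {c} : Ideal R) • (⊤ : Submodule R M)) : ∃ y : M, x = c • y := by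
  refine Submodule.smul_induction_on h (fun r hr m _ => ?_) (fun y z hy hz => ?_)
  · obtain ⟨t, rfl⟩ := Ideal.mem_span_singleton.mp hr
    exact ⟨t • m, by rw [smul_smul]⟩
  · obtain ⟨y', rfl⟩ := hy
    obtain ⟨z', rfl⟩ := hz
    exact ⟨y' + z', by rw [smul_add]⟩

lemma smul_top_mono_ideal {C1 C2 : Ideal R} (h : C1 ≤ C2) :
    C1 • (⊤ : Submodule R M) ≤ C2 • ⊤ :=
  Submodule.smul_mono h le_rfl

end Helpers

section Complex

variable {R : Type u} [CommRing R] [IsNoetherianRing R]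
variable (G : ChainComplex (ModuleCat.{u} R) ℤ)
variable (hflat : ∀ i, Module.Flat R (G.X i))
variable (hsurj : ∀ (i j k : ℤ), j + 1 = i → k + 1 = j →
  ∀ z : G.X j, G.d j k z = 0 → ∃ u : G.X i, G.d i j u = z)

include hflat hsurj in
/-- The key "pro-acyclicity" statement: approximate cycles (modulo high box-ideal powers)
are close to actual cycles. Proved by induction on the list of generators. -/
lemma dagger (l : List R) : ∀ (i j : ℤ), j + 1 = i → ∀ n : ℕ, ∃ m : ℕ, n ≤ m ∧
    ∀ g : G.X i, G.d i j g ∈ Jb l m • (⊤ : Submodule R (G.X j)) →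
      g ∈ LinearMap.ker (G.d i j).hom ⊔ Jb l n • (⊤ : Submodule R (G.X i)) := by
  induction l with
  | nil =>
    intro i j hij n
    refine ⟨n, le_rfl, fun g hg => ?_⟩
    have : G.d i j g = 0 := by
      simpa [Jb] using hg
    exact Submodule.mem_sup_left (LinearMap.mem_ker.mpr this)
  | cons b l' ih =>
    intro i j hij n
    set k : ℤ := j - 1 with hk
    have hkj : k + 1 = j := by omega
    -- IH at spot i with target n
    obtain ⟨m2, hm2n, hIH1⟩ := ih i j hij n
    -- IH at spot j with target m2
    obtain ⟨m1, hm1m2, hIH2⟩ := ih j k hkj m2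
    -- N such that A^N ≤ Jb l' m1, where A = span of l'
    obtain ⟨N, hN⟩ := pow_le_Jb l' m1
    -- division lemma
    obtain ⟨m, hmn, hmm2, hdiv⟩ := division b (Ideal.span {x | x ∈ l'}) N n m2
    refine ⟨m, hmn, fun g hg => ?_⟩
    -- decompose d g
    rw [show Jb (b :: l') m = Ideal.span {b ^ m} ⊔ Jb l' m from rfl,
      Submodule.sup_smul] at hg
    obtain ⟨y', hy', y'', hy'', hdg⟩ := Submodule.mem_sup.mp hg
    obtain ⟨h, rfl⟩ := eq_smul_of_mem_span_singleton_smul_top hy'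
    -- d (d g) = 0
    have hd2 : G.d j k (G.d i j g) = 0 := by
      have h1 : (G.d i j ≫ G.d j k) g = G.d j k (G.d i j g) := rfl
      rw [← h1, G.d_comp_d i j k]
      rfl
    -- b^m • d h ∈ Jb l' m • ⊤
    have hbm : (b ^ m) • (G.d j k h) ∈ Jb l' m • (⊤ : Submodule R (G.X k)) := by
      have h2 : G.d j k ((b ^ m) • h) + G.d j k y'' = 0 := by
        rw [← map_add, hdg, hd2]
      have h3 : (b ^ m) • G.d j k h = - G.d j k y'' := by
        rw [← map_smul]
        exact eq_neg_of_add_eq_zero_left h2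
      rw [h3]
      exact Submodule.neg_mem _ (map_mem_smul_top _ _ hy'')
    -- flatness: divide by b^m
    haveI := hflat k
    have hcolon : G.d j k h ∈ ((Jb l' m).colon (Ideal.span {b ^ m})) •
        (⊤ : Submodule R (G.X k)) := flat_colon _ _ _ hbm
    -- multiply by b^(m-n) and use the division lemma
    have hmul : (b ^ (m - n)) • G.d j k h ∈ Jb l' m1 • (⊤ : Submodule R (G.X k)) := by
      refine smul_mem_smul_top_of (fun r hr => ?_) hcolon
      have hrb : b ^ m * r ∈ (Ideal.span {x | x ∈ l'}) ^ m := by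
        rw [Ideal.mem_colon_span_singleton] at hr
        have := Jb_le_pow l' m hr
        rwa [mul_comm]
      exact hN (hdiv r hrb)
    have hdh : G.d j k ((b ^ (m - n)) • h) ∈ Jb l' m1 • (⊤ : Submodule R (G.X k)) := by
      rw [map_smul]; exact hmul
    obtain ⟨z, hz, w, hw, hzw⟩ := Submodule.mem_sup.mp (hIH2 _ hdh)
    obtain ⟨u, hu⟩ := hsurj i j k hij hkj z (LinearMap.mem_ker.mp hz)
    -- correct g by the boundary b^n • u
    have hgu : G.d i j (g - (b ^ n) • u) ∈ Jb l' m2 • (⊤ : Submodule R (G.X j)) := by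
      have e2 : (b ^ m) • h = (b ^ n) • z + (b ^ n) • w := by
        rw [← smul_add, hzw, smul_smul, ← pow_add]
        congr 2
        omega
      have e1 : G.d i j (g - (b ^ n) • u) = (b ^ n) • w + y'' := by
        rw [map_sub, map_smul, hu, ← hdg, e2]
        abel
      rw [e1]
      refine Submodule.add_mem _ (Submodule.smul_mem _ _ hw) ?_
      exact smul_top_mono_ideal (Jb_antitone l' hmm2) hy''
    have hfin := hIH1 _ hgu
    have hsplit : g = (g - (b ^ n) • u) + (b ^ n) • u := by abel
    rw [hsplit]
    refine Submodule.add_mem _ ?_ ?_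
    · refine (sup_le_sup_left (smul_top_mono_ideal (M := G.X i) ?_) (LinearMap.ker (G.d i j).hom)) hfin
      exact le_sup_right
    · refine Submodule.mem_sup_right (smul_top_mono_ideal (le_sup_left) ?_)
      exact Submodule.smul_mem_smul (Ideal.subset_span rfl) Submodule.mem_top

include hflat hsurj in
/-- Artin–Rees type property for the cycle/boundary submodules of `G`. -/
lemma star (I : Ideal R) (i j : ℤ) (hij : j + 1 = i) (n : ℕ) :
    ∃ m : ℕ, n ≤ m ∧ (I ^ m • ⊤ : Submodule R (G.X j)) ⊓ LinearMap.range (G.d i j).hom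
      ≤ I ^ n • LinearMap.range (G.d i j).hom := by
  obtain ⟨S, hS⟩ := (IsNoetherian.noetherian I : I.FG)
  set l : List R := S.toList with hl
  have hspan : Ideal.span {x | x ∈ l} = I := by
    rw [← hS]
    congr 1
    ext x
    simp [hl]
  obtain ⟨md, _, hd⟩ := dagger G hflat hsurj l i j hij n
  obtain ⟨E, hE⟩ := pow_le_Jb l md
  refine ⟨max n E, le_max_left _ _, ?_⟩
  rintro x ⟨hx1, g, rfl⟩
  have hx2 : G.d i j g ∈ Jb l md • (⊤ : Submodule R (G.X j)) := by
    refine smul_top_mono_ideal ?_ hx1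
    calc I ^ max n E ≤ I ^ E := Ideal.pow_le_pow_right (le_max_right _ _)
    _ = (Ideal.span {x | x ∈ l}) ^ E := by rw [hspan]
    _ ≤ Jb l md := hE
  obtain ⟨zk, hzk, v, hv, hzv⟩ := Submodule.mem_sup.mp (hd g hx2)
  have : G.d i j g = G.d i j v := by
    rw [← hzv, map_add, LinearMap.mem_ker.mp hzk, zero_add]
  rw [this]
  have hmap : G.d i j v ∈ Submodule.map (G.d i j).hom
      (Jb l n • (⊤ : Submodule R (G.X i))) := Submodule.mem_map_of_mem hv
  rw [Submodule.map_smul'', Submodule.map_top] at hmap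
  refine Submodule.smul_mono ?_ le_rfl hmap
  calc Jb l n ≤ (Ideal.span {x | x ∈ l}) ^ n := Jb_le_pow l n
  _ = I ^ n := by rw [hspan]

/-- Upgrading a bound function to a monotone one. -/
lemma exists_monotone (f : ℕ → ℕ) :
    ∃ ψ : ℕ → ℕ, (∀ n, n ≤ ψ n) ∧ Monotone ψ ∧ ∀ n, f n ≤ ψ n := by
  refine ⟨fun n => max n ((Finset.range (n + 1)).sup f), fun n => le_max_left _ _, ?_, ?_⟩
  · intro s t hst
    exact max_le_max hst (Finset.sup_mono (Finset.range_subset_range.mpr (by omega)))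
  · intro n
    exact le_trans (Finset.le_sup (by simp)) (le_max_right _ _)

include hflat hsurj in
/-- Exactness of the termwise adic completion. -/
lemma completed_exact (I : Ideal R) (i j k : ℤ) (hij : j + 1 = i) (hjk : k + 1 = j) :
    Function.Exact (AdicCompletion.map I (G.d i j).hom)
      (AdicCompletion.map I (G.d j k).hom) := by
  have hcomp : ((G.d j k).hom ∘ₗ (G.d i j).hom) = 0 := by
    ext g
    have h1 : (G.d i j ≫ G.d j k) g = G.d j k (G.d i j g) := rfl
    simp only [LinearMap.comp_apply, LinearMap.zero_apply]
    rw [← h1, G.d_comp_d i j k]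
    rfl
  refine LinearMap.exact_of_comp_eq_zero_of_ker_le_range ?_ (fun x hx => ?_)
  · rw [AdicCompletion.map_comp, hcomp, AdicCompletion.map_zero]
  · -- the chase
    rw [LinearMap.mem_ker] at hx
    obtain ⟨b, rfl⟩ := AdicCompletion.mk_surjective I (G.X j) x
    rw [AdicCompletion.map_mk] at hx
    have hb : ∀ n : ℕ, G.d j k (b n) ∈ (I ^ n • ⊤ : Submodule R (G.X k)) := by
      intro n
      simpa using congrArg (fun y => y.val n) hx
    -- difference control for the Cauchy sequence b
    have hbd : ∀ (p s t : ℕ), p ≤ s → p ≤ t →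
        (b s : G.X j) - b t ∈ (I ^ p • ⊤ : Submodule R (G.X j)) := by
      intro p s t hps hpt
      have h1 := b.property hps
      have h2 := b.property hpt
      exact SModEq.sub_mem.mp (h1.symm.trans h2)
    choose f1 hf1a hf1b using star G hflat hsurj I j k hjk
    choose f2 hf2a hf2b using star G hflat hsurj I i j hij
    obtain ⟨ψ, hψ1, hψ2, hψ3⟩ := exists_monotone f2
    -- Step 1: true cycles approximating b
    have hz : ∀ n : ℕ, ∃ z : G.X j, G.d j k z = 0 ∧
        (b (f1 n) : G.X j) - z ∈ (I ^ n • ⊤ : Submodule R (G.X j)) := by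
      intro n
      have h1 : G.d j k (b (f1 n)) ∈ I ^ n • LinearMap.range (G.d j k).hom :=
        hf1b n ⟨hb (f1 n), ⟨b (f1 n), rfl⟩⟩
      rw [← Submodule.map_top, ← Submodule.map_smul''] at h1
      obtain ⟨c, hc, hceq⟩ := Submodule.mem_map.mp h1
      refine ⟨(b (f1 n) : G.X j) - c, ?_, ?_⟩
      · rw [map_sub, hceq, sub_self]
      · simpa using hc
    choose z hz0 hz1 using hz
    -- difference control for the cycles z
    have hzd : ∀ p q : ℕ, p ≤ q → z p - z q ∈ (I ^ p • ⊤ : Submodule R (G.X j)) := by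
      intro p q hpq
      have e : z p - z q = ((b (f1 q) : G.X j) - z q) - ((b (f1 p) : G.X j) - z p)
          + ((b (f1 p) : G.X j) - b (f1 q)) := by abel
      rw [e]
      refine Submodule.add_mem _ (Submodule.sub_mem _ ?_ (hz1 p)) ?_
      · exact Submodule.smul_mono_left (Ideal.pow_le_pow_right hpq) (hz1 q)
      · exact hbd p (f1 p) (f1 q) (hf1a p) (hpq.trans (hf1a q))
    -- Step 2: boundary differences
    have hwd : ∀ n : ℕ, ∃ u : G.X i, u ∈ (I ^ n • ⊤ : Submodule R (G.X i)) ∧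
        G.d i j u = z (ψ (n + 1)) - z (ψ n) := by
      intro n
      have hcyc : G.d j k (z (ψ (n + 1)) - z (ψ n)) = 0 := by
        rw [map_sub, hz0, hz0, sub_self]
      obtain ⟨u', hu'⟩ := hsurj i j k hij hjk _ hcyc
      have hmem : z (ψ (n + 1)) - z (ψ n) ∈
          (I ^ (f2 n) • ⊤ : Submodule R (G.X j)) ⊓ LinearMap.range (G.d i j).hom := by
        constructor
        · have h1 : z (ψ n) - z (ψ (n + 1)) ∈ (I ^ (ψ n) • ⊤ : Submodule R (G.X j)) :=
            hzd (ψ n) (ψ (n + 1)) (hψ2 (by omega))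
          have h2 := Submodule.neg_mem _ h1
          rw [neg_sub] at h2
          exact Submodule.smul_mono_left (Ideal.pow_le_pow_right (hψ3 n)) h2
        · exact ⟨u', hu'⟩
      have h3 := hf2b n hmem
      rw [← Submodule.map_top, ← Submodule.map_smul''] at h3
      obtain ⟨u, hu, hueq⟩ := Submodule.mem_map.mp h3
      exact ⟨u, hu, hueq⟩
    choose u hu0 hu1 using hwd
    obtain ⟨u0, hu0'⟩ := hsurj i j k hij hjk (z (ψ 0)) (hz0 _)
    -- assemble the preimage Cauchy sequence
    set a : ℕ → G.X i := fun n => u0 + ∑ t ∈ Finset.range n, u t with ha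
    have hacauchy : ∀ n, a n ≡ a (n + 1) [SMOD (I ^ n • ⊤ : Submodule R (G.X i))] := by
      intro n
      rw [SModEq.sub_mem]
      have : a n - a (n + 1) = -(u n) := by
        simp only [ha, Finset.sum_range_succ]
        abel
      rw [this]
      exact Submodule.neg_mem _ (hu0 n)
    have hda : ∀ n, G.d i j (a n) = z (ψ n) := by
      intro n
      induction n with
      | zero => simpa [ha] using hu0'
      | succ n ih =>
        simp only [ha, Finset.sum_range_succ, ← add_assoc, map_add] at ih ⊢
        rw [ih, hu1 n]
        abel
    refine ⟨AdicCompletion.mk I (G.X i) (AdicCompletion.AdicCauchySequence.mk I (G.X i) a hacauchy), ?_⟩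
    rw [AdicCompletion.map_mk]
    refine AdicCompletion.ext fun n => ?_
    show Submodule.Quotient.mk (G.d i j (a n)) = Submodule.Quotient.mk (b n)
    rw [Submodule.Quotient.eq, hda n]
    have e : z (ψ n) - (b n : G.X j) = -((b (f1 (ψ n)) : G.X j) - z (ψ n))
        + ((b (f1 (ψ n)) : G.X j) - b n) := by abel
    rw [e]
    refine Submodule.add_mem _ (Submodule.neg_mem _ ?_) ?_
    · exact Submodule.smul_mono_left (Ideal.pow_le_pow_right (hψ1 n)) (hz1 (ψ n))
    · exact hbd n (f1 (ψ n)) n ((hψ1 n).trans (hf1a (ψ n))) le_rfl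

end Complex

end AdicFlatExact

/-- If `G` is an exact complex of flat modules over a commutative
noetherian ring `R` and `a` is an ideal of `R`, then the termwise `a`-adic completion
`Λ^a(G)` is also exact. -/


theorem adicCompletion_of_exact_flat_complex_exact
    {R : Type u} [CommRing R] [IsNoetherianRing R] (I : Ideal R)
    (G : ChainComplex (ModuleCat.{u} R) ℤ)
    (hflat : ∀ i, Module.Flat R (G.X i))
    (hexact : ∀ i, CategoryTheory.Limits.IsZero (G.homology i)) :
    ∀ i, CategoryTheory.Limits.IsZero
      ((((adicCompletionFunctor R I).mapHomologicalComplex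
          (ComplexShape.down ℤ)).obj G).homology i) := by
  classical
  have hsurj : ∀ (i j k : ℤ), j + 1 = i → k + 1 = j →
      ∀ z : G.X j, G.d j k z = 0 → ∃ u : G.X i, G.d i j u = z := by
    intro i j k hij hjk z hz
    have hrel1 : (ComplexShape.down ℤ).Rel i j := by
      rw [ComplexShape.down_Rel]; exact hij
    have hrel2 : (ComplexShape.down ℤ).Rel j k := by
      rw [ComplexShape.down_Rel]; exact hjk
    have hprev : (ComplexShape.down ℤ).prev j = i := (ComplexShape.down ℤ).prev_eq' hrel1
    have hnext : (ComplexShape.down ℤ).next j = k := (ComplexShape.down ℤ).next_eq' hrel2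
    have hEx : G.ExactAt j := (G.exactAt_iff_isZero_homology j).mpr (hexact j)
    rw [G.exactAt_iff' i j k hprev hnext] at hEx
    rw [ShortComplex.moduleCat_exact_iff] at hEx
    exact hEx z hz
  intro i
  set K := (((adicCompletionFunctor R I).mapHomologicalComplex
      (ComplexShape.down ℤ)).obj G) with hK
  have hrel1 : (ComplexShape.down ℤ).Rel (i + 1) i := by
    rw [ComplexShape.down_Rel]
  have hrel2 : (ComplexShape.down ℤ).Rel i (i - 1) := by
    rw [ComplexShape.down_Rel]; omega
  have hprev : (ComplexShape.down ℤ).prev i = i + 1 := (ComplexShape.down ℤ).prev_eq' hrel1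
  have hnext : (ComplexShape.down ℤ).next i = i - 1 := (ComplexShape.down ℤ).next_eq' hrel2
  rw [← K.exactAt_iff_isZero_homology i]
  rw [K.exactAt_iff' (i + 1) i (i - 1) hprev hnext]
  rw [ShortComplex.moduleCat_exact_iff]
  intro x hx
  have hexact2 := AdicFlatExact.completed_exact G hflat hsurj I (i + 1) i (i - 1) rfl (by omega)
  have hx' : AdicCompletion.map I (G.d i (i - 1)).hom x = 0 := hx
  obtain ⟨y, hy⟩ := (hexact2 x).mp hx'
  exact ⟨y, hy⟩
end
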